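/- arXiv:1308.2633 — 8 statements merged into one kernel-verified Lean document; each statement's English description precedes it below -/
import Mathlib

section
/- If L is a symmetric n×n real matrix whose rows each sum to zero, then all cofactors of L are equal; that is, (-1)^{i+j} det(M_{ij}(L)) is independent of the choice of i and j. -/
/-- The (i,j) cofactor of a square matrix: `(-1)^(i+j)` times the determinant of
the submatrix obtained by deleting row `i` and column `j`. -/
noncomputable def cofactor {n : ℕ} (L : Matrix (Fin (n + 1)) (Fin (n + 1)) ℝ)
    (i j : Fin (n + 1)) : ℝ :=
  (-1 : ℝ) ^ ((i : ℕ) + (j : ℕ)) * (L.submatrix i.succAbove j.succAbove).det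

lemma cofactor_eq_adjugate {n : ℕ} (L : Matrix (Fin (n + 1)) (Fin (n + 1)) ℝ)
    (i j : Fin (n + 1)) : cofactor L i j = L.adjugate j i := by
  rw [Matrix.adjugate_fin_succ_eq_det_submatrix]
  rfl

lemma det_eq_zero_of_row_sums_zero {m : ℕ} (M : Matrix (Fin (m + 1)) (Fin (m + 1)) ℝ)
    (h : ∀ r, ∑ c, M r c = 0) : M.det = 0 := by
  rw [← Matrix.exists_mulVec_eq_zero_iff]
  refine ⟨fun _ => 1, ?_, ?_⟩
  · intro hv
    have := congrFun hv 0
    simp at this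
  · funext r
    simp [Matrix.mulVec, dotProduct, h r]

lemma cofactor_row_const {n : ℕ} (L : Matrix (Fin (n + 1)) (Fin (n + 1)) ℝ)
    (hrow : ∀ r, ∑ c, L r c = 0) (i j l : Fin (n + 1)) :
    cofactor L i j = cofactor L i l := by
  rw [cofactor_eq_adjugate, cofactor_eq_adjugate, Matrix.adjugate_apply,
    Matrix.adjugate_apply]
  have key : (L.updateRow i (Pi.single j 1 - Pi.single l 1)).det = 0 := by
    apply det_eq_zero_of_row_sums_zero
    intro r
    by_cases hr : r = i
    · subst hr
      simp [Matrix.updateRow_self, Finset.sum_sub_distrib]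
    · simp only [Matrix.updateRow_ne hr]
      exact hrow r
  have expand : (L.updateRow i (Pi.single j 1 - Pi.single l 1)).det
      = (L.updateRow i (Pi.single j 1)).det - (L.updateRow i (Pi.single l 1)).det := by
    have : ((Pi.single j 1 - Pi.single l 1 : Fin (n+1) → ℝ))
        = (Pi.single j 1 : Fin (n+1) → ℝ) + (-1 : ℝ) • (Pi.single l 1 : Fin (n+1) → ℝ) := by
      funext c; simp [sub_eq_add_neg]
    rw [this, Matrix.det_updateRow_add, Matrix.det_updateRow_smul]
    ring
  rw [expand] at key
  linarith

lemma cofactor_symm {n : ℕ} (L : Matrix (Fin (n + 1)) (Fin (n + 1)) ℝ)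
    (hsymm : L.IsSymm) (i j : Fin (n + 1)) : cofactor L i j = cofactor L j i := by
  unfold cofactor
  rw [Nat.add_comm (i : ℕ) (j : ℕ)]
  congr 1
  rw [← Matrix.det_transpose, Matrix.transpose_submatrix, hsymm]

/-- all cofactors of a symmetric matrix with zero row sums coincide. -/
theorem all_cofactors_equal {n : ℕ} (L : Matrix (Fin (n + 1)) (Fin (n + 1)) ℝ)
    (hsymm : L.IsSymm) (hrow : ∀ i, ∑ j, L i j = 0) :
    ∀ i j k l, cofactor L i j = cofactor L k l := by
  intro i j k l
  calc cofactor L i j = cofactor L i l := cofactor_row_const L hrow i j l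
    _ = cofactor L l i := cofactor_symm L hsymm i l
    _ = cofactor L l k := cofactor_row_const L hrow l i k
    _ = cofactor L k l := cofactor_symm L hsymm l k
end

section
/- If L is an n×n real matrix (not necessarily symmetric) whose rows each sum to zero, then the cofactor C_{ij}(L) = (-1)^{i+j} det(M_{ij}(L)) does not depend on j; i.e., for fixed i, all cofactors along the i-th row are equal. -/
lemma cofactor_eq_det_updateRow {n : ℕ} (L : Matrix (Fin (n + 1)) (Fin (n + 1)) ℝ)
    (i j : Fin (n + 1)) :
    cofactor L i j = (L.updateRow i (Pi.single j 1)).det := by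
  rw [← Matrix.adjugate_apply, Matrix.adjugate_fin_succ_eq_det_submatrix, cofactor]

/-- if all rows of `L` sum to zero, then for fixed `i` the cofactors
`C_{ij}(L)` do not depend on `j`. -/
theorem cofactors_row_independent {n : ℕ} (L : Matrix (Fin (n + 1)) (Fin (n + 1)) ℝ)
    (hrow : ∀ i, ∑ j, L i j = 0) (i : Fin (n + 1)) :
    ∀ j k, cofactor L i j = cofactor L i k := by
  intro j k
  rcases eq_or_ne j k with rfl | hjk
  · rfl
  rw [cofactor_eq_det_updateRow, cofactor_eq_det_updateRow]
  have key : (L.updateRow i (Pi.single j 1 - Pi.single k 1)).det = 0 := by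
    rw [← Matrix.exists_mulVec_eq_zero_iff]
    refine ⟨fun _ => 1, ?_, ?_⟩
    · intro h
      have := congrFun h 0
      simp at this
    · ext r
      rcases eq_or_ne r i with rfl | hri
      · simp [Matrix.mulVec, dotProduct, Pi.single_apply, hjk,
          Finset.sum_sub_distrib]
      · simp [Matrix.mulVec, dotProduct, Matrix.updateRow_ne hri, hrow r]
  have := Matrix.det_updateRow_add L i (Pi.single j 1 - Pi.single k 1) (Pi.single k 1)
  simp only [sub_add_cancel] at this
  rw [this, key, zero_add] at *
end

section
/- If L is an n×n real matrix whose columns each sum to zero, then for fixed j the cofactors C_{ij}(L) = (-1)^{i+j} det(M_{ij}(L)) do not depend on i. -/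
lemma det_eq_zero_of_col_sums_zero {m : Type*} [Fintype m] [DecidableEq m]
    [Nonempty m] (M : Matrix m m ℝ) (h : ∀ j, ∑ i, M i j = 0) : M.det = 0 := by
  rw [← Matrix.exists_vecMul_eq_zero_iff]
  refine ⟨fun _ => 1, by simp [funext_iff], ?_⟩
  ext j
  simp [Matrix.vecMul, dotProduct, h j]

lemma cofactor_eq_det_updateCol {n : ℕ} (L : Matrix (Fin (n + 1)) (Fin (n + 1)) ℝ)
    (i j : Fin (n + 1)) :
    cofactor L i j = (L.updateCol j (Pi.single i 1)).det := by
  have h : cofactor L i j = L.adjugate.transpose i j := by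
    rw [Matrix.transpose_apply, Matrix.adjugate_fin_succ_eq_det_submatrix, cofactor]
  rw [h, Matrix.adjugate_transpose, Matrix.adjugate_apply, Matrix.updateRow_transpose,
    Matrix.det_transpose]

/-- if all columns of `L` sum to zero, then for fixed `j` the cofactors
`C_{ij}(L)` do not depend on `i`. -/
theorem cofactors_col_independent {n : ℕ} (L : Matrix (Fin (n + 1)) (Fin (n + 1)) ℝ)
    (hcol : ∀ j, ∑ i, L i j = 0) (j : Fin (n + 1)) :
    ∀ i k, cofactor L i j = cofactor L k j := by
  intro i k
  rw [cofactor_eq_det_updateCol, cofactor_eq_det_updateCol]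
  have key : (L.updateCol j (Pi.single i 1 - Pi.single k 1)).det = 0 := by
    apply det_eq_zero_of_col_sums_zero
    intro j'
    by_cases hj : j' = j
    · subst hj
      simp [Matrix.updateCol_apply, Finset.sum_sub_distrib]
    · calc ∑ i', (L.updateCol j (Pi.single i 1 - Pi.single k 1)) i' j'
          = ∑ i', L i' j' := by
            apply Finset.sum_congr rfl
            intro i' _
            simp [Matrix.updateCol_apply, Ne.symm hj, hj]
        _ = 0 := hcol j'
  have := Matrix.det_updateCol_add L j (Pi.single i 1 - Pi.single k 1) (Pi.single k 1)
  simp only [sub_add_cancel] at this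
  rw [this, key, zero_add]
end

section
/- (Matrix-Tree Theorem, weighted symmetric version) If L is an n×n symmetric real matrix with all row sums zero, then the common cofactor C(L) satisfies C(L) = (-1)^{n+1} Σ_τ Π_{{i,j} ∈ Edges(τ)} L_{ij}, where the sum ranges over all trees τ on the vertex set {1,…,n}. -/
open scoped Classical

/-- The amplitude `A_τ(L)`: the product of `L a b` over the edges `{a,b}` of `τ`
with `a < b`. -/
noncomputable def amplitude {n : ℕ} (τ : SimpleGraph (Fin n))
    (L : Matrix (Fin n) (Fin n) ℝ) : ℝ :=
  ∏ p ∈ Finset.univ.filter (fun p : Fin n × Fin n => p.1 < p.2 ∧ τ.Adj p.1 p.2), L p.1 p.2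

/-- The tree sum `T(L) = Σ_τ A_τ(L)`, summing over all trees on the vertex set. -/
noncomputable def treeSum {n : ℕ} (L : Matrix (Fin n) (Fin n) ℝ) : ℝ :=
  ∑ τ ∈ Finset.univ.filter (fun τ : SimpleGraph (Fin n) => τ.IsTree), amplitude τ L

open Finset Matrix

namespace MTT

variable {n m : ℕ} {α : Type*}

lemma det_updateRow_finset_sum (M : Matrix (Fin m) (Fin m) ℝ) (i : Fin m)
    (s : Finset α) (v : α → Fin m → ℝ) :
    (M.updateRow i (∑ a ∈ s, v a)).det = ∑ a ∈ s, (M.updateRow i (v a)).det := by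
  induction s using Finset.induction_on with
  | empty =>
    simp only [Finset.sum_empty]
    exact Matrix.det_eq_zero_of_row_eq_zero i (fun j => by simp)
  | @insert a s h ih =>
    rw [Finset.sum_insert h, Matrix.det_updateRow_add, ih, Finset.sum_insert h]

lemma cofactor_eq_det_updateRow (L : Matrix (Fin (n + 1)) (Fin (n + 1)) ℝ)
    (i j : Fin (n + 1)) :
    cofactor L i j = (L.updateRow i (Pi.single j 1)).det := by
  rw [Matrix.det_succ_row _ i, Finset.sum_eq_single j]
  · have h1 : (L.updateRow i (Pi.single j 1)) i j = 1 := by simp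
    have h2 : (L.updateRow i (Pi.single j 1)).submatrix i.succAbove j.succAbove
        = L.submatrix i.succAbove j.succAbove := by
      ext a b
      simp [Matrix.submatrix, Matrix.updateRow_apply, Fin.succAbove_ne i a]
    rw [h1, h2, mul_one, cofactor]
  · intro b _ hb
    simp [Matrix.updateRow_apply, Pi.single_eq_of_ne hb]
  · simp

end MTT
namespace MTT
lemma det_updateRow_indep (L : Matrix (Fin (n + 1)) (Fin (n + 1)) ℝ)
    (hcol : ∀ c, ∑ k, L k c = 0) (u : Fin (n + 1) → ℝ) {i i' : Fin (n + 1)} (h : i ≠ i') :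
    (L.updateRow i u).det = (L.updateRow i' u).det := by
  set M := L.updateRow i u with hMdef
  have hMi' : M i' = L i' := Matrix.updateRow_ne (Ne.symm h)
  have hsum : (∑ k ∈ Finset.univ.erase i', (-1 : ℝ) • L k) = L i' := by
    have h2 : L i' + ∑ k ∈ Finset.univ.erase i', L k = 0 := by
      funext c
      simp only [Pi.add_apply, Pi.zero_apply]
      erw [Finset.sum_apply]
      rw [Finset.add_sum_erase _ (fun k => L k c) (Finset.mem_univ i')]
      exact hcol c
    have h3 : ∑ k ∈ Finset.univ.erase i', L k = -L i' := by
      funext c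
      have := congrFun h2 c
      simp only [Finset.sum_apply, Pi.add_apply, Pi.zero_apply, Pi.neg_apply] at this ⊢
      linarith
    funext c
    have := congrFun h3 c
    erw [Finset.sum_apply] at this
    simp only [Finset.sum_apply, Pi.neg_apply, Pi.smul_apply, smul_eq_mul, neg_one_mul,
      Finset.sum_neg_distrib] at this ⊢
    linarith
  have key : M.det = -(M.updateRow i' (L i)).det := by
    calc M.det = (M.updateRow i' (M i')).det := by rw [Matrix.updateRow_eq_self]
    _ = -(M.updateRow i' (L i)).det := by
        rw [hMi', ← hsum, det_updateRow_finset_sum, Finset.sum_eq_single i]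
        · rw [Matrix.det_updateRow_smul]; ring
        · intro k hk hki
          rw [Matrix.det_updateRow_smul]
          have hki' : k ≠ i' := Finset.ne_of_mem_erase hk
          have : (M.updateRow i' (L k)).det = 0 := by
            apply Matrix.det_zero_of_row_eq (show k ≠ i' from hki')
            rw [Matrix.updateRow_ne hki', Matrix.updateRow_self, hMdef, Matrix.updateRow_ne hki]
          rw [this]; ring
        · intro hi; exact absurd (Finset.mem_erase.mpr ⟨h, Finset.mem_univ i⟩) hi
  have swap_eq : M.updateRow i' (L i)
      = (L.updateRow i' u).submatrix (Equiv.swap i i') id := by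
    ext r c
    rcases eq_or_ne r i' with rfl | hri'
    · simp [Matrix.updateRow_self, Equiv.swap_apply_right, Matrix.updateRow_ne h]
    rcases eq_or_ne r i with rfl | hri
    · rw [Matrix.updateRow_ne hri', hMdef, Matrix.updateRow_self]
      simp [Equiv.swap_apply_left]
    · rw [Matrix.updateRow_ne hri', hMdef, Matrix.updateRow_ne hri]
      simp [Equiv.swap_apply_of_ne_of_ne hri hri', Matrix.updateRow_ne hri']
  rw [key, swap_eq, Matrix.det_permute]
  simp [Equiv.Perm.sign_swap h]
end MTT
namespace MTT
lemma cofactor_transpose (L : Matrix (Fin (n + 1)) (Fin (n + 1)) ℝ) (hsymm : L.IsSymm)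
    (i j : Fin (n + 1)) : cofactor L i j = cofactor L j i := by
  unfold cofactor
  rw [Nat.add_comm (i : ℕ)]
  congr 1
  rw [← Matrix.det_transpose]
  congr 1
  ext a b
  simp only [Matrix.transpose_apply, Matrix.submatrix_apply]
  exact (Matrix.IsSymm.apply hsymm _ _)

lemma cofactor_const (L : Matrix (Fin (n + 1)) (Fin (n + 1)) ℝ) (hsymm : L.IsSymm)
    (hrow : ∀ i, ∑ j, L i j = 0) (i j : Fin (n + 1)) :
    cofactor L i j = cofactor L 0 0 := by
  have hcol : ∀ c, ∑ k, L k c = 0 := by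
    intro c
    have : ∀ k, L k c = L c k := fun k => (Matrix.IsSymm.apply hsymm c k)
    simp only [this]
    exact hrow c
  have indep : ∀ (a a' b : Fin (n + 1)), cofactor L a b = cofactor L a' b := by
    intro a a' b
    rcases eq_or_ne a a' with rfl | hne
    · rfl
    · rw [cofactor_eq_det_updateRow, cofactor_eq_det_updateRow]
      exact det_updateRow_indep L hcol _ hne
  calc cofactor L i j = cofactor L 0 j := indep i 0 j
  _ = cofactor L j 0 := cofactor_transpose L hsymm 0 j
  _ = cofactor L 0 0 := indep j 0 0
end MTT
namespace MTT

noncomputable def par (f : Fin n → Fin (n + 1)) : Fin (n + 1) → Fin (n + 1) :=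
  fun a => Fin.cases 0 f a

@[simp] lemma par_zero (f : Fin n → Fin (n + 1)) : par f 0 = 0 := rfl
@[simp] lemma par_succ (f : Fin n → Fin (n + 1)) (k : Fin n) : par f k.succ = f k := rfl

def Good (f : Fin n → Fin (n + 1)) : Prop := ∀ a, ∃ m, (par f)^[m] a = 0

noncomputable def vrow (k : Fin n) (b : Fin (n + 1)) : Fin n → ℝ :=
  fun c => (if b = c.succ then (1 : ℝ) else 0) - (if k = c then 1 else 0)

noncomputable def Dmat (f : Fin n → Fin (n + 1)) : Matrix (Fin n) (Fin n) ℝ :=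
  Matrix.of fun k c => (if f k = c.succ then (1 : ℝ) else 0) - (if k = c then 1 else 0)

lemma det_minor_expand (L : Matrix (Fin (n + 1)) (Fin (n + 1)) ℝ)
    (hrow : ∀ i, ∑ j, L i j = 0) :
    (L.submatrix Fin.succ Fin.succ).det
      = ∑ f ∈ Fintype.piFinset (fun k : Fin n => Finset.univ.erase k.succ),
          (∏ k, L k.succ (f k)) * (Dmat f).det := by
  have hrowdec : (fun k : Fin n => (L.submatrix Fin.succ Fin.succ) k)
      = fun k => ∑ b ∈ Finset.univ.erase k.succ, L k.succ b • vrow k b := by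
    funext k
    funext c
    simp only [Finset.sum_apply, Pi.smul_apply, vrow, smul_eq_mul, Matrix.submatrix_apply]
    simp only [mul_sub]
    rw [Finset.sum_sub_distrib]
    have e1 : ∑ b ∈ Finset.univ.erase k.succ, L k.succ b * (if b = c.succ then (1:ℝ) else 0)
        = if k = c then 0 else L k.succ c.succ := by
      rcases eq_or_ne k c with rfl | hkc
      · rw [if_pos rfl, Finset.sum_eq_zero]
        intro b hb
        rw [if_neg, mul_zero]
        exact fun hbc => (Finset.ne_of_mem_erase hb) (by rw [hbc])
      · rw [if_neg hkc, Finset.sum_eq_single c.succ]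
        · simp
        · intro b _ hb; rw [if_neg hb, mul_zero]
        · intro hc
          exact absurd (Finset.mem_erase.mpr ⟨fun hh => hkc (Fin.succ_injective _ hh).symm, Finset.mem_univ _⟩) hc
    have e2 : ∑ b ∈ Finset.univ.erase k.succ, L k.succ b * (if k = c then (1:ℝ) else 0)
        = if k = c then -L k.succ k.succ else 0 := by
      rcases eq_or_ne k c with rfl | hkc
      · simp only [if_pos rfl, mul_one]
        have h0 := hrow k.succ
        rw [← Finset.add_sum_erase _ _ (Finset.mem_univ k.succ)] at h0
        simp only [if_pos trivial, mul_one]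
        linarith
      · simp [if_neg hkc]
    rw [e1, e2]
    rcases eq_or_ne k c with rfl | hkc
    · simp
    · simp [hkc]
  have base : (L.submatrix Fin.succ Fin.succ).det
      = Matrix.detRowAlternating (fun k : Fin n => (L.submatrix Fin.succ Fin.succ) k) := rfl
  rw [base, hrowdec]
  rw [show (Matrix.detRowAlternating (fun k => ∑ b ∈ Finset.univ.erase (Fin.succ k), L k.succ b • vrow k b) : ℝ)
      = (Matrix.detRowAlternating (R := ℝ) (n := Fin n)).toMultilinearMap
          (fun k => ∑ b ∈ Finset.univ.erase (Fin.succ k), L k.succ b • vrow k b) from rfl]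
  rw [MultilinearMap.map_sum_finset]
  refine Finset.sum_congr rfl fun r _ => ?_
  have : (Matrix.detRowAlternating (R := ℝ) (n := Fin n)).toMultilinearMap
      (fun k => L k.succ (r k) • vrow k (r k))
      = (∏ k, L k.succ (r k)) • (Matrix.detRowAlternating (R := ℝ) (n := Fin n)).toMultilinearMap
          (fun k => vrow k (r k)) := by
    exact MultilinearMap.map_smul_univ _ _ _
  rw [this, smul_eq_mul]
  rfl

end MTT
namespace MTT

lemma det_Dmat_notGood (f : Fin n → Fin (n + 1)) (hn : ¬ Good f) : (Dmat f).det = 0 := by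
  rw [Good] at hn
  push_neg at hn
  obtain ⟨a, ha⟩ := hn
  set g := par f with hg
  -- find a periodic point
  obtain ⟨i, j, hij, hmeq⟩ : ∃ i j : ℕ, i < j ∧ g^[i] a = g^[j] a := by
    obtain ⟨i, j, hne, heq⟩ := Finite.exists_ne_map_eq_of_infinite (fun m : ℕ => g^[m] a)
    rcases lt_or_gt_of_ne hne with h | h
    · exact ⟨i, j, h, heq⟩
    · exact ⟨j, i, h, heq.symm⟩
  set b := g^[i] a with hb
  set t := j - i with ht
  have htpos : 0 < t := Nat.sub_pos_of_lt hij
  have hper : g^[t] b = b := by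
    rw [hb, ← Function.iterate_add_apply, ht, Nat.sub_add_cancel hij.le, ← hmeq]
  have hbne : ∀ m, g^[m] b ≠ 0 := by
    intro m
    rw [hb, ← Function.iterate_add_apply]
    exact ha _
  set C : Finset (Fin (n + 1)) := (Finset.range t).image (fun m => g^[m] b) with hC
  have h0C : (0 : Fin (n + 1)) ∉ C := by
    simp only [hC, Finset.mem_image]
    rintro ⟨m, _, hm⟩
    exact hbne m hm
  have hgC : ∀ x ∈ C, g x ∈ C := by
    intro x hx
    simp only [hC, Finset.mem_image, Finset.mem_range] at hx ⊢
    obtain ⟨m, hm, rfl⟩ := hx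
    rcases eq_or_lt_of_le (Nat.succ_le_of_lt hm) with h | h
    · exact ⟨0, htpos, by rw [Function.iterate_zero_apply, ← Function.iterate_succ_apply' g m b, h, hper]⟩
    · exact ⟨m + 1, h, Function.iterate_succ_apply' g m b⟩
  have hsurj : ∀ x ∈ C, ∃ y ∈ C, g y = x := by
    intro x hx
    simp only [hC, Finset.mem_image, Finset.mem_range] at hx
    obtain ⟨m, hm, rfl⟩ := hx
    rcases Nat.eq_zero_or_pos m with rfl | hmpos
    · refine ⟨g^[t - 1] b, ?_, ?_⟩
      · simp only [hC, Finset.mem_image, Finset.mem_range]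
        exact ⟨t - 1, Nat.sub_lt htpos one_pos, rfl⟩
      · rw [← Function.iterate_succ_apply' g (t-1) b, Nat.succ_eq_add_one, Nat.sub_add_cancel htpos, hper,
          Function.iterate_zero_apply]
    · refine ⟨g^[m - 1] b, ?_, ?_⟩
      · simp only [hC, Finset.mem_image, Finset.mem_range]
        exact ⟨m - 1, lt_trans (Nat.sub_lt hmpos one_pos) hm, rfl⟩
      · rw [← Function.iterate_succ_apply' g (m-1) b, Nat.succ_eq_add_one, Nat.sub_add_cancel hmpos]
  have hinj : ∀ x ∈ C, ∀ y ∈ C, g x = g y → x = y := by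
    have := Finset.inj_on_of_surj_on_of_card_le (s := C) (t := C) (fun x _ => g x)
      (fun x hx => hgC x hx) (fun x hx => by obtain ⟨y, hy, hgy⟩ := hsurj x hx; exact ⟨y, hy, hgy⟩)
      le_rfl
    exact fun x hx y hy h => this hx hy h
  -- the left kernel vector
  set v : Fin n → ℝ := fun k => if k.succ ∈ C then 1 else 0 with hv
  have hvne : v ≠ 0 := by
    have hbC : b ∈ C := by
      simp only [hC, Finset.mem_image, Finset.mem_range]
      exact ⟨0, htpos, rfl⟩
    obtain ⟨k0, hk0⟩ := Fin.exists_succ_eq_of_ne_zero (hbne 0)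
    intro hcon
    have := congrFun hcon k0
    simp only [hv, Pi.zero_apply] at this
    rw [if_pos (by rw [hk0]; exact hbC)] at this
    norm_num at this
  have hker : v ᵥ* (Dmat f) = 0 := by
    funext c
    have expand : (v ᵥ* (Dmat f)) c = ∑ k, v k * (Dmat f) k c := by
      simp [Matrix.vecMul, dotProduct]
    rw [expand]
    have step : ∑ k, v k * (Dmat f) k c
        = ∑ k ∈ Finset.univ.filter (fun k : Fin n => k.succ ∈ C), (Dmat f) k c := by
      rw [Finset.sum_filter]
      refine Finset.sum_congr rfl fun k _ => ?_
      simp only [hv]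
      split_ifs with h
      · rw [one_mul]
      · rw [zero_mul]
    rw [step]
    have split : ∑ k ∈ Finset.univ.filter (fun k : Fin n => k.succ ∈ C), (Dmat f) k c
        = (∑ k ∈ Finset.univ.filter (fun k : Fin n => k.succ ∈ C), (if f k = c.succ then (1:ℝ) else 0))
          - (∑ k ∈ Finset.univ.filter (fun k : Fin n => k.succ ∈ C), (if k = c then (1:ℝ) else 0)) := by
      rw [← Finset.sum_sub_distrib]
      rfl
    rw [split]
    have e2 : (∑ k ∈ Finset.univ.filter (fun k : Fin n => k.succ ∈ C), (if k = c then (1:ℝ) else 0))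
        = if c.succ ∈ C then 1 else 0 := by
      rcases em (c.succ ∈ C) with h | h
      · rw [if_pos h, Finset.sum_eq_single c]
        · rw [if_pos rfl]
        · intro k _ hk; rw [if_neg hk]
        · intro hcmem; exact absurd (Finset.mem_filter.mpr ⟨Finset.mem_univ c, h⟩) hcmem
      · rw [if_neg h, Finset.sum_eq_zero]
        intro k hk
        rw [if_neg]
        rintro rfl
        exact h (Finset.mem_filter.mp hk).2
    have e1 : (∑ k ∈ Finset.univ.filter (fun k : Fin n => k.succ ∈ C), (if f k = c.succ then (1:ℝ) else 0))
        = if c.succ ∈ C then 1 else 0 := by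
      rcases em (c.succ ∈ C) with h | h
      · rw [if_pos h]
        obtain ⟨y, hyC, hgy⟩ := hsurj c.succ h
        obtain ⟨k0, hk0⟩ := Fin.exists_succ_eq_of_ne_zero
          (show y ≠ 0 from fun hy0 => h0C (hy0 ▸ hyC))
        rw [Finset.sum_eq_single k0]
        · rw [if_pos]
          have : g k0.succ = c.succ := by rw [hk0]; exact hgy
          simpa [hg] using this
        · intro k hk hkne
          rw [if_neg]
          intro hfk
          have hkC : k.succ ∈ C := (Finset.mem_filter.mp hk).2
          have : g k.succ = g y := by
            rw [hgy]
            simpa [hg] using hfk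
          have := hinj _ hkC _ hyC this
          apply hkne
          apply Fin.succ_injective
          rw [this, hk0]
        · intro hmem
          exact absurd (Finset.mem_filter.mpr ⟨Finset.mem_univ k0, by rw [hk0]; exact hyC⟩) hmem
      · rw [if_neg h, Finset.sum_eq_zero]
        intro k hk
        rw [if_neg]
        intro hfk
        have hkC : k.succ ∈ C := (Finset.mem_filter.mp hk).2
        have : g k.succ ∈ C := hgC _ hkC
        rw [show g k.succ = f k from rfl, hfk] at this
        exact h this
    rw [e1, e2, sub_self]
    rfl
  exact (Matrix.exists_vecMul_eq_zero_iff).mp ⟨v, hvne, hker⟩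

end MTT
namespace MTT

noncomputable def depth (f : Fin n → Fin (n + 1)) (hG : Good f) (a : Fin (n + 1)) : ℕ :=
  Nat.find (hG a)

lemma depth_spec (f : Fin n → Fin (n + 1)) (hG : Good f) (a : Fin (n + 1)) :
    (par f)^[depth f hG a] a = 0 := Nat.find_spec (hG a)

lemma depth_par_lt (f : Fin n → Fin (n + 1)) (hG : Good f) {a : Fin (n + 1)} (ha : a ≠ 0) :
    depth f hG (par f a) < depth f hG a := by
  have hpos : 0 < depth f hG a := by
    rcases Nat.eq_zero_or_pos (depth f hG a) with h | h
    · exfalso; apply ha; have := depth_spec f hG a; rwa [h, Function.iterate_zero_apply] at this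
    · exact h
  have hle : depth f hG (par f a) ≤ depth f hG a - 1 := by
    apply Nat.find_le
    have := depth_spec f hG a
    rwa [show depth f hG a = (depth f hG a - 1) + 1 from (Nat.sub_add_cancel hpos).symm,
      Function.iterate_succ_apply] at this
  omega

lemma det_Dmat_good (f : Fin n → Fin (n + 1)) (hG : Good f) :
    (Dmat f).det = (-1 : ℝ) ^ n := by
  set d := depth f hG with hd
  set b : Fin n → ℕ := fun k => d k.succ with hbdef
  have hnosucc : ∀ k c : Fin n, f k = c.succ → b c < b k := by
    intro k c hfk
    have : par f k.succ = c.succ := by simp [hfk]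
    have := depth_par_lt f hG (Fin.succ_ne_zero k)
    rwa [show par f k.succ = c.succ from by simp [hfk]] at this
  have hBT : ((Dmat f)ᵀ).BlockTriangular b := by
    intro i j hb
    show (Dmat f) j i = 0
    have hji : j ≠ i := fun h => absurd (h ▸ hb) (lt_irrefl _)
    have hfj : f j ≠ i.succ := fun h => absurd hb (not_lt_of_gt (hnosucc j i h))
    simp [Dmat, hfj, hji]
  have hblocks : ∀ a, (((Dmat f)ᵀ).toSquareBlock b a) = (-1 : ℝ) • 1 := by
    intro a
    ext ⟨k, hk⟩ ⟨c, hc⟩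
    show (Dmat f) c k = _
    have hfc : f c ≠ k.succ := by
      intro h
      have := hnosucc c k h
      rw [hk, hc] at this
      exact lt_irrefl _ this
    simp only [Dmat, Matrix.of_apply, if_neg hfc, Matrix.smul_apply, Matrix.one_apply, smul_eq_mul]
    rcases eq_or_ne c k with rfl | hck
    · simp
    · have : (⟨k, hk⟩ : {x // b x = a}) ≠ ⟨c, hc⟩ := by
        simp only [ne_eq, Subtype.mk.injEq]
        exact fun h => hck h.symm
      simp [hck, this]
  rw [← Matrix.det_transpose, hBT.det]
  have : ∀ a ∈ Finset.univ.image b,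
      (((Dmat f)ᵀ).toSquareBlock b a).det
        = (-1 : ℝ) ^ (Finset.univ.filter (fun k => b k = a)).card := by
    intro a _
    rw [hblocks a, Matrix.det_smul, Matrix.det_one, mul_one]
    congr 1
    exact Fintype.card_subtype _
  rw [Finset.prod_congr rfl this, Finset.prod_pow_eq_pow_sum]
  congr 1
  rw [← Finset.card_eq_sum_card_fiberwise (fun x _ => Finset.mem_image_of_mem b (Finset.mem_univ x))]
  simp

end MTT
namespace MTT

noncomputable def Gf (f : Fin n → Fin (n + 1)) : SimpleGraph (Fin (n + 1)) :=
  SimpleGraph.fromRel (fun a b => a ≠ 0 ∧ par f a = b)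

lemma good_no_period (f : Fin n → Fin (n + 1)) (hG : Good f) {a : Fin (n + 1)} (ha : a ≠ 0)
    {m : ℕ} (hm : 0 < m) : (par f)^[m] a ≠ a := by
  intro hper
  obtain ⟨j, hj⟩ := hG a
  set q := j + 1 with hq
  have h1 : (par f)^[m * q] a = a := by
    rw [Function.iterate_mul]
    exact Function.iterate_fixed hper q
  have h2 : (par f)^[m * q] a = 0 := by
    have hle : j ≤ m * q := by
      calc j ≤ q := by omega
      _ ≤ m * q := Nat.le_mul_of_pos_left q hm
    rw [show m * q = (m * q - j) + j from (Nat.sub_add_cancel hle).symm,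
      Function.iterate_add_apply, hj]
    exact Function.iterate_fixed (par_zero f) _
  exact ha (h1 ▸ h2)

lemma adj_par (f : Fin n → Fin (n + 1)) (hG : Good f) {a : Fin (n + 1)} (ha : a ≠ 0) :
    (Gf f).Adj a (par f a) := by
  rw [Gf, SimpleGraph.fromRel_adj]
  refine ⟨?_, Or.inl ⟨ha, rfl⟩⟩
  intro h
  exact good_no_period f hG ha one_pos (by simpa using h.symm)

lemma Gf_connected (f : Fin n → Fin (n + 1)) (hG : Good f) : (Gf f).Connected := by
  have hreach : ∀ m : ℕ, ∀ a, depth f hG a ≤ m → (Gf f).Reachable a 0 := by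
    intro m
    induction m with
    | zero =>
      intro a hd
      have := depth_spec f hG a
      rw [Nat.le_zero.mp hd, Function.iterate_zero_apply] at this
      rw [this]
    | succ m ih =>
      intro a hd
      rcases eq_or_ne a 0 with rfl | ha
      · rfl
      · have hlt := depth_par_lt f hG ha
        exact (adj_par f hG ha).toWalk.reachable.trans (ih (par f a) (by omega))
  constructor
  intro a b
  exact (hreach _ a le_rfl).trans (hreach _ b le_rfl).symm

lemma Gf_bridge (f : Fin n → Fin (n + 1)) (hG : Good f) {a : Fin (n + 1)} (ha : a ≠ 0) :
    (Gf f).IsBridge s(a, par f a) := by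
  rw [SimpleGraph.isBridge_iff]
  intro hreach
  set S : Set (Fin (n + 1)) := {y | ∃ m, (par f)^[m] y = a} with hS
  have haS : a ∈ S := ⟨0, rfl⟩
  have hgaS : par f a ∉ S := by
    rintro ⟨m, hm⟩
    exact good_no_period f hG ha (Nat.succ_pos m)
      (by rw [Function.iterate_succ_apply]; exact hm)
  have hboundary : ∀ x y, (Gf f).Adj x y → x ∈ S → y ∉ S → x = a ∧ y = par f a := by
    intro x y hadj hx hy
    rw [Gf, SimpleGraph.fromRel_adj] at hadj
    obtain ⟨hne, hcase⟩ := hadj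
    rcases hcase with ⟨hx0, rfl⟩ | ⟨hy0, rfl⟩
    · obtain ⟨m, hm⟩ := hx
      rcases Nat.eq_zero_or_pos m with rfl | hmp
      · rw [Function.iterate_zero_apply] at hm
        exact ⟨hm, by rw [hm]⟩
      · exfalso
        apply hy
        refine ⟨m - 1, ?_⟩
        have hmm : (par f)^[(m-1)+1] x = a := by rw [Nat.sub_add_cancel hmp]; exact hm
        rwa [Function.iterate_succ_apply] at hmm
    · exfalso
      apply hy
      obtain ⟨m, hm⟩ := hx
      exact ⟨m + 1, by rw [Function.iterate_add_apply, Function.iterate_one, hm]⟩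
  obtain ⟨p⟩ := hreach
  obtain ⟨d, _, hdS, hdnS⟩ := p.exists_boundary_dart S haS hgaS
  have hadj' := d.adj
  rw [SimpleGraph.deleteEdges_adj] at hadj'
  obtain ⟨hadj, hne⟩ := hadj'
  obtain ⟨h1, h2⟩ := hboundary _ _ hadj hdS hdnS
  exact hne (by rw [h1, h2]; exact Set.mem_singleton _)

end MTT
namespace MTT

lemma Gf_isTree (f : Fin n → Fin (n + 1)) (hG : Good f) : (Gf f).IsTree := by
  constructor
  · exact Gf_connected f hG
  · rw [SimpleGraph.isAcyclic_iff_forall_adj_isBridge]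
    intro v w hadj
    have hadj' := hadj
    rw [Gf, SimpleGraph.fromRel_adj] at hadj'
    obtain ⟨hne, hcase⟩ := hadj'
    rcases hcase with ⟨hv0, rfl⟩ | ⟨hw0, rfl⟩
    · exact Gf_bridge f hG hv0
    · rw [Sym2.eq_swap]
      exact Gf_bridge f hG hw0

end MTT
namespace MTT

lemma succ_ne_of_good (f : Fin n → Fin (n + 1)) (hG : Good f) (k : Fin n) : f k ≠ k.succ := by
  intro h
  exact good_no_period f hG (Fin.succ_ne_zero k) one_pos (by simpa using h)

lemma adj_succ (f : Fin n → Fin (n + 1)) (hG : Good f) (k : Fin n) :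
    (Gf f).Adj k.succ (f k) := by
  have := adj_par f hG (Fin.succ_ne_zero k)
  simpa using this

lemma amplitude_Gf (L : Matrix (Fin (n + 1)) (Fin (n + 1)) ℝ) (hsymm : L.IsSymm)
    (f : Fin n → Fin (n + 1)) (hG : Good f) :
    amplitude (Gf f) L = ∏ k, L k.succ (f k) := by
  rw [amplitude]
  refine (Finset.prod_bij
    (i := fun (k : Fin n) (_ : k ∈ Finset.univ) =>
      if f k < k.succ then (f k, k.succ) else (k.succ, f k)) ?_ ?_ ?_ ?_).symm
  · intro k _
    rw [Finset.mem_filter]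
    have hne := succ_ne_of_good f hG k
    have hadj := adj_succ f hG k
    split_ifs with h
    · exact ⟨Finset.mem_univ _, h, hadj.symm⟩
    · exact ⟨Finset.mem_univ _, lt_of_le_of_ne (not_lt.mp h) (Ne.symm hne), hadj⟩
  · intro k _ k' _ heq
    have hcase : (k.succ = k'.succ) ∨ (k.succ = f k' ∧ f k = k'.succ) := by
      split_ifs at heq with h1 h2 h2
      · exact Or.inl (congrArg Prod.snd heq)
      · exact Or.inr ⟨congrArg Prod.snd heq, congrArg Prod.fst heq⟩
      · exact Or.inr ⟨congrArg Prod.fst heq, congrArg Prod.snd heq⟩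
      · exact Or.inl (congrArg Prod.fst heq)
    rcases hcase with h | ⟨ha, hb⟩
    · exact Fin.succ_injective _ h
    · exfalso
      apply good_no_period f hG (Fin.succ_ne_zero k) (show (0:ℕ) < 2 by norm_num)
      show par f (par f k.succ) = k.succ
      rw [par_succ, hb, par_succ, ← ha]
  · intro p hp
    rw [Finset.mem_filter] at hp
    obtain ⟨_, hlt, hadj⟩ := hp
    rw [Gf, SimpleGraph.fromRel_adj] at hadj
    obtain ⟨hne, hcase⟩ := hadj
    rcases hcase with ⟨h10, hg1⟩ | ⟨h20, hg2⟩
    · obtain ⟨k, hk⟩ := Fin.exists_succ_eq_of_ne_zero h10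
      refine ⟨k, Finset.mem_univ _, ?_⟩
      have hfk : f k = p.2 := by rw [← hg1, ← hk]; simp
      rw [if_neg]
      · rw [hfk, hk]
      · rw [hfk, hk]; exact not_lt.mpr hlt.le
    · obtain ⟨k, hk⟩ := Fin.exists_succ_eq_of_ne_zero h20
      refine ⟨k, Finset.mem_univ _, ?_⟩
      have hfk : f k = p.1 := by rw [← hg2, ← hk]; simp
      rw [if_pos]
      · rw [hfk, hk]
      · rw [hfk, hk]; exact hlt
  · intro k _
    split_ifs with h
    · exact (Matrix.IsSymm.apply hsymm _ _)
    · rfl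

end MTT
namespace MTT

lemma Gf_injective (f f' : Fin n → Fin (n + 1)) (hG : Good f) (hG' : Good f')
    (heq : Gf f = Gf f') : f = f' := by
  have main : ∀ m : ℕ, ∀ k : Fin n, depth f hG k.succ ≤ m → f k = f' k := by
    intro m
    induction m using Nat.strong_induction_on with
    | _ m ih =>
      intro k hdep
      by_contra hne
      -- edge {k.succ, f' k} in Gf f' = Gf f
      have h1 : (Gf f).Adj k.succ (f' k) := by rw [heq]; exact adj_succ f' hG' k
      rw [Gf, SimpleGraph.fromRel_adj] at h1
      obtain ⟨-, hcase1⟩ := h1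
      have hb : par f (f' k) = k.succ := by
        rcases hcase1 with ⟨-, hg⟩ | ⟨-, hg⟩
        · exact absurd (by simpa using hg) hne
        · exact hg
      -- edge {k.succ, f k} in Gf f = Gf f'
      have h2 : (Gf f').Adj k.succ (f k) := by rw [← heq]; exact adj_succ f hG k
      rw [Gf, SimpleGraph.fromRel_adj] at h2
      obtain ⟨-, hcase2⟩ := h2
      have hw0 : f k ≠ 0 ∧ par f' (f k) = k.succ := by
        rcases hcase2 with ⟨-, hg⟩ | ⟨hfk0, hg⟩
        · exfalso
          apply hne
          have : f' k = f k := by simpa using hg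
          exact this.symm
        · exact ⟨hfk0, hg⟩
      obtain ⟨hfk0, hq⟩ := hw0
      obtain ⟨j, hj⟩ := Fin.exists_succ_eq_of_ne_zero hfk0
      -- f j ≠ f' j at smaller depth
      have hfj_ne : f j ≠ f' j := by
        intro hcontra
        -- par f (f k) = par f' (f k) = k.succ, giving a 2-cycle for f
        have e1 : par f (f k) = k.succ := by
          rw [← hj, par_succ, hcontra, ← par_succ f' j, hj]; exact hq
        apply good_no_period f hG (Fin.succ_ne_zero k) (show (0:ℕ) < 2 by norm_num)
        show par f (par f k.succ) = k.succ
        rw [par_succ]; exact e1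
      have hdj : depth f hG (j.succ) < m := by
        have : depth f hG (f k) < depth f hG k.succ := by
          have := depth_par_lt f hG (Fin.succ_ne_zero k)
          rwa [par_succ] at this
        rw [hj]
        omega
      exact hfj_ne (ih _ hdj j le_rfl)
  funext k
  exact main (depth f hG k.succ) k le_rfl

end MTT
namespace MTT

lemma Gf_surjective (τ : SimpleGraph (Fin (n + 1))) (hτ : τ.IsTree) :
    ∃ f : Fin n → Fin (n + 1), Good f ∧ Gf f = τ := by
  have hconn : τ.Connected := hτ.isConnected
  have hchoice : ∀ k : Fin n, ∃ b, τ.Adj k.succ b ∧ τ.dist b 0 < τ.dist k.succ 0 := by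
    intro k
    obtain ⟨p, hp⟩ := hconn.exists_walk_length_eq_dist k.succ 0
    cases p with
    | cons h q =>
      refine ⟨_, h, ?_⟩
      have h1 := SimpleGraph.dist_le q
      rw [SimpleGraph.Walk.length_cons] at hp
      omega
  choose f hadj hdist using hchoice
  have hG : Good f := by
    intro a
    suffices h : ∀ m : ℕ, ∀ a : Fin (n + 1), τ.dist a 0 ≤ m → ∃ j, (par f)^[j] a = 0 by
      exact h (τ.dist a 0) a le_rfl
    intro m
    induction m using Nat.strong_induction_on with
    | _ m ih =>
      intro a hda
      rcases eq_or_ne a 0 with rfl | ha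
      · exact ⟨0, rfl⟩
      · obtain ⟨k, hk⟩ := Fin.exists_succ_eq_of_ne_zero ha
        have hpos : 0 < τ.dist a 0 := hconn.pos_dist_of_ne ha
        have hlt : τ.dist (f k) 0 < τ.dist a 0 := by rw [← hk] at *; exact hdist k
        obtain ⟨j, hj⟩ := ih (τ.dist (f k) 0) (by omega) (f k) le_rfl
        refine ⟨j + 1, ?_⟩
        rw [Function.iterate_succ_apply, show par f a = f k from by rw [← hk]; simp]
        exact hj
  refine ⟨f, hG, ?_⟩
  -- Gf f ≤ τ
  have hle : Gf f ≤ τ := by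
    intro a b hab
    rw [Gf, SimpleGraph.fromRel_adj] at hab
    obtain ⟨hne, hcase⟩ := hab
    rcases hcase with ⟨ha0, hg⟩ | ⟨hb0, hg⟩
    · obtain ⟨k, hk⟩ := Fin.exists_succ_eq_of_ne_zero ha0
      have : f k = b := by rw [← hg, ← hk]; simp
      rw [← hk, ← this]
      exact hadj k
    · obtain ⟨k, hk⟩ := Fin.exists_succ_eq_of_ne_zero hb0
      have : f k = a := by rw [← hg, ← hk]; simp
      rw [← hk, ← this]
      exact (hadj k).symm
  have htree1 : (Gf f).IsTree := Gf_isTree f hG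
  have hcard1 := htree1.card_edgeFinset
  have hcard2 := hτ.card_edgeFinset
  have hsub : (Gf f).edgeFinset ⊆ τ.edgeFinset := by
    rw [SimpleGraph.edgeFinset_subset_edgeFinset]
    exact hle
  have : (Gf f).edgeFinset = τ.edgeFinset :=
    Finset.eq_of_subset_of_card_le hsub (by omega)
  exact SimpleGraph.edgeFinset_inj.mp this

end MTT

/-- weighted Matrix-Tree theorem: for an `(n+1) × (n+1)` symmetric real
matrix with zero row sums, every cofactor equals `(-1)^{(n+1)+1} Σ_τ A_τ(L)`. -/
theorem matrix_tree_theorem {n : ℕ} (L : Matrix (Fin (n + 1)) (Fin (n + 1)) ℝ)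
    (hsymm : L.IsSymm) (hrow : ∀ i, ∑ j, L i j = 0) :
    ∀ i j, cofactor L i j = (-1 : ℝ) ^ ((n + 1) + 1) * treeSum L := by
  intro i j
  rw [MTT.cofactor_const L hsymm hrow i j]
  have h00 : cofactor L 0 0 = (L.submatrix Fin.succ Fin.succ).det := by
    rw [cofactor, Fin.succAbove_zero]
    norm_num
  rw [h00, MTT.det_minor_expand L hrow]
  set s := Fintype.piFinset (fun k : Fin n => Finset.univ.erase k.succ) with hs
  rw [← Finset.sum_filter_add_sum_filter_not s MTT.Good]
  have hzero : ∑ f ∈ s.filter (fun f => ¬ MTT.Good f),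
      (∏ k, L k.succ (f k)) * (MTT.Dmat f).det = 0 := by
    apply Finset.sum_eq_zero
    intro f hf
    rw [MTT.det_Dmat_notGood f (Finset.mem_filter.mp hf).2, mul_zero]
  rw [hzero, add_zero]
  have hgood : ∑ f ∈ s.filter MTT.Good, (∏ k, L k.succ (f k)) * (MTT.Dmat f).det
      = (-1 : ℝ) ^ n * ∑ f ∈ s.filter MTT.Good, (∏ k, L k.succ (f k)) := by
    rw [Finset.mul_sum]
    refine Finset.sum_congr rfl fun f hf => ?_
    rw [MTT.det_Dmat_good f (Finset.mem_filter.mp hf).2]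
    ring
  rw [hgood]
  have hbij : ∑ f ∈ s.filter MTT.Good, (∏ k, L k.succ (f k)) = treeSum L := by
    rw [treeSum]
    refine Finset.sum_bij (i := fun f _ => MTT.Gf f) ?_ ?_ ?_ ?_
    · intro f hf
      rw [Finset.mem_filter]
      exact ⟨Finset.mem_univ _, MTT.Gf_isTree f (Finset.mem_filter.mp hf).2⟩
    · intro f hf f' hf' heq
      exact MTT.Gf_injective f f' (Finset.mem_filter.mp hf).2 (Finset.mem_filter.mp hf').2 heq
    · intro τ hτ
      obtain ⟨f, hG, hGf⟩ := MTT.Gf_surjective τ (Finset.mem_filter.mp hτ).2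
      refine ⟨f, Finset.mem_filter.mpr ⟨?_, hG⟩, hGf⟩
      rw [hs, Fintype.mem_piFinset]
      intro k
      exact Finset.mem_erase.mpr ⟨MTT.succ_ne_of_good f hG k, Finset.mem_univ _⟩
    · intro f hf
      exact (MTT.amplitude_Gf L hsymm f (Finset.mem_filter.mp hf).2).symm
  rw [hbij]
  have : (-1 : ℝ) ^ ((n + 1) + 1) = (-1 : ℝ) ^ n := by
    rw [pow_add, pow_add]
    ring
  rw [this]
end

section
/- For an n×n Laplace-like matrix L and indices i < j, the directional derivative v_{ij}(C(L)) of the common cofactor C(L) along the tangent vector v_{ij} = ∂/∂L_{ij} + ∂/∂L_{ji} − ∂/∂L_{ii} − ∂/∂L_{jj} equals −C(L'), where L' = M_{jj}(L_+) and L_+ is obtained from L by adding row j to row i and column j to column i. -/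
/-- The tangent vector `E_{ij}`: `+1` at entries `(i,j)` and `(j,i)`, `-1` at
entries `(i,i)` and `(j,j)`, `0` elsewhere. -/
def tangentE {n : ℕ} (i j : Fin n) : Matrix (Fin n) (Fin n) ℝ :=
  Matrix.of fun a b =>
    (if a = i ∧ b = j then (1 : ℝ) else 0) + (if a = j ∧ b = i then 1 else 0) -
      (if a = i ∧ b = i then 1 else 0) - (if a = j ∧ b = j then 1 else 0)

/-- `L₊`: the matrix obtained from `L` by adding row `j` to row `i` and then
column `j` to column `i`. -/
def addRowCol {n : ℕ} (L : Matrix (Fin n) (Fin n) ℝ) (i j : Fin n) :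
    Matrix (Fin n) (Fin n) ℝ :=
  Matrix.of fun a b =>
    L a b + (if a = i then L j b else 0) +
      (if b = i then L a j + (if a = i then L j j else 0) else 0)

/-- A matrix whose rows all sum to zero has zero determinant. -/
lemma det_eq_zero_of_row_sums {m : ℕ} (M : Matrix (Fin (m + 1)) (Fin (m + 1)) ℝ)
    (h : ∀ a, ∑ b, M a b = 0) : M.det = 0 := by
  rw [← Matrix.exists_mulVec_eq_zero_iff]
  refine ⟨fun _ => 1, ?_, ?_⟩
  · intro hc
    have := congrFun hc 0
    simp at this
  · ext a
    simpa [Matrix.mulVec, dotProduct] using h a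

/-- If all rows of `M` sum to zero, the adjugate does not depend on its first index. -/
lemma adjugate_fst {m : ℕ} (M : Matrix (Fin (m + 1)) (Fin (m + 1)) ℝ)
    (h : ∀ a, ∑ b, M a b = 0) (b b' a : Fin (m + 1)) :
    M.adjugate b a = M.adjugate b' a := by
  have key : (M.updateRow a ((Pi.single b 1 : Fin (m + 1) → ℝ) +
      (-1 : ℝ) • (Pi.single b' 1 : Fin (m + 1) → ℝ))).det = 0 := by
    apply det_eq_zero_of_row_sums
    intro r
    by_cases hr : r = a
    · subst hr
      simp [Matrix.updateRow_self, Pi.single_apply, Finset.sum_add_distrib,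
        Finset.sum_ite_eq', mul_ite]
    · simpa [Matrix.updateRow_ne hr] using h r
  rw [Matrix.det_updateRow_add, Matrix.det_updateRow_smul] at key
  have hb : M.adjugate b a = (M.updateRow a (Pi.single b 1)).det := Matrix.adjugate_apply M b a
  have hb' : M.adjugate b' a = (M.updateRow a (Pi.single b' 1)).det := Matrix.adjugate_apply M b' a
  rw [hb, hb']
  linarith

/-- For a symmetric matrix with zero row sums, all entries of the adjugate agree. -/
lemma adjugate_const {m : ℕ} (M : Matrix (Fin (m + 1)) (Fin (m + 1)) ℝ)
    (hs : M.IsSymm) (h : ∀ a, ∑ b, M a b = 0) (a b a' b' : Fin (m + 1)) :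
    M.adjugate a b = M.adjugate a' b' := by
  have hT : ∀ x y, M.adjugate x y = M.adjugate y x := by
    intro x y
    conv_lhs => rw [← hs, ← Matrix.adjugate_transpose]
    rfl
  calc M.adjugate a b = M.adjugate a' b := adjugate_fst M h a a' b
    _ = M.adjugate b a' := hT a' b
    _ = M.adjugate b' a' := adjugate_fst M h b b' a'
    _ = M.adjugate a' b' := hT b' a'

/-- The cofactor is the transposed adjugate entry. -/
lemma cofactor_eq_adjugate_s7 {m : ℕ} (M : Matrix (Fin (m + 1)) (Fin (m + 1)) ℝ)
    (a b : Fin (m + 1)) : cofactor M a b = M.adjugate b a := by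
  rw [cofactor, Matrix.adjugate_fin_succ_eq_det_submatrix]

/-- For a symmetric matrix with zero row sums, all cofactors agree. -/
lemma cofactor_const {m : ℕ} (M : Matrix (Fin (m + 1)) (Fin (m + 1)) ℝ)
    (hs : M.IsSymm) (h : ∀ a, ∑ b, M a b = 0) (a b a' b' : Fin (m + 1)) :
    cofactor M a b = cofactor M a' b' := by
  rw [cofactor_eq_adjugate_s7, cofactor_eq_adjugate_s7]
  exact adjugate_const M hs h b a b' a'

/-- for a Laplace-like `L` and `i < j`, the directional derivative of the
common cofactor `C(L)` along `v_{ij}` (i.e. `d/dt C(L + t E_{ij})` at `t = 0`) equals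
`-C(L')` where `L' = M_{jj}(L₊)`.  (All cofactors of a Laplace-like matrix agree, so
the statement is made for every representative of `C`.) -/
theorem cofactor_directional_derivative {n : ℕ}
    (L : Matrix (Fin (n + 2)) (Fin (n + 2)) ℝ)
    (hsymm : L.IsSymm) (hrow : ∀ i, ∑ j, L i j = 0)
    (i j : Fin (n + 2)) (hij : i < j) :
    ∀ (a b : Fin (n + 2)) (a' b' : Fin (n + 1)),
      deriv (fun t : ℝ => cofactor (L + t • tangentE i j) a b) 0 =
        -cofactor ((addRowCol L i j).submatrix j.succAbove j.succAbove) a' b' := by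
  intro a b a' b'
  have hne : i ≠ j := ne_of_lt hij
  have hne' : j ≠ i := (ne_of_lt hij).symm
  -- the index `i'` of `i` inside `Fin (n+1)` after deleting `j`
  have hi : (i : ℕ) < n + 1 := by
    have := hij
    have hj := j.isLt
    omega
  set i' : Fin (n + 1) := ⟨(i : ℕ), hi⟩ with hi'def
  have hji' : j.succAbove i' = i := by
    rw [Fin.succAbove_of_castSucc_lt]
    · ext; simp [hi'def]
    · have : (i'.castSucc : Fin (n + 2)) = i := by ext; simp [hi'def]
      rw [this]; exact hij
  set A : Matrix (Fin (n + 1)) (Fin (n + 1)) ℝ := L.submatrix j.succAbove j.succAbove with hA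
  set L' : Matrix (Fin (n + 1)) (Fin (n + 1)) ℝ :=
    (addRowCol L i j).submatrix j.succAbove j.succAbove with hL'
  have hLs : ∀ x y, L x y = L y x := fun x y => hsymm.apply y x
  have hco : ∀ (p q : Prop) [Decidable p] [Decidable q],
      (if p ∧ q then (1 : ℝ) else 0) = if q ∧ p then 1 else 0 := by
    intro p q _ _; exact if_congr and_comm rfl rfl
  have hEsw : ∀ x y, tangentE i j x y = tangentE i j y x := by
    intro x y
    simp only [tangentE, Matrix.of_apply]
    rw [hco (y = i) (x = j), hco (y = j) (x = i), hco (y = i) (x = i), hco (y = j) (x = j)]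
    ring
  -- `L + t E` is symmetric with zero row sums
  have hEsymm : ∀ t : ℝ, (L + t • tangentE i j).IsSymm := by
    intro t
    apply Matrix.IsSymm.ext
    intro x y
    simp only [Matrix.add_apply, Matrix.smul_apply]
    rw [hLs y x, hEsw y x]
  have hErow : ∀ (t : ℝ) (x : Fin (n + 2)), ∑ y, (L + t • tangentE i j) x y = 0 := by
    intro t x
    simp only [Matrix.add_apply, Matrix.smul_apply, tangentE, Matrix.of_apply, smul_eq_mul]
    rw [Finset.sum_add_distrib]
    rw [hrow x, zero_add]
    rw [← Finset.mul_sum]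
    have : ∑ y, ((if x = i ∧ y = j then (1:ℝ) else 0) + (if x = j ∧ y = i then 1 else 0) -
        (if x = i ∧ y = i then 1 else 0) - (if x = j ∧ y = j then 1 else 0)) = 0 := by
      simp [sub_eq_add_neg, Finset.sum_add_distrib, ite_and, Finset.sum_ite_eq',
        apply_ite (f := fun r : ℝ => -r)]
      split_ifs <;> norm_num
    rw [this, mul_zero]
  -- the perturbation restricted to the minor
  have hEsub : ∀ x y : Fin (n + 1), tangentE i j (j.succAbove x) (j.succAbove y)
      = -(if x = i' ∧ y = i' then (1 : ℝ) else 0) := by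
    intro x y
    have hx_ne : j.succAbove x ≠ j := Fin.succAbove_ne j x
    have hy_ne : j.succAbove y ≠ j := Fin.succAbove_ne j y
    have hxi : (j.succAbove x = i) ↔ x = i' := by rw [← hji', Fin.succAbove_right_inj]
    have hyi : (j.succAbove y = i) ↔ y = i' := by rw [← hji', Fin.succAbove_right_inj]
    simp [tangentE, hx_ne, hy_ne, hxi, hyi]
  -- the minor of `L + t E` is a row-update of `A`
  set e : Fin (n + 1) → ℝ := Pi.single i' 1 with he
  have hsub : ∀ t : ℝ, (L + t • tangentE i j).submatrix j.succAbove j.succAbove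
      = A.updateRow i' (A i' + (-t) • e) := by
    intro t
    ext x y
    by_cases hx : x = i'
    · subst hx
      rw [Matrix.submatrix_apply, Matrix.updateRow_self, Matrix.add_apply, Matrix.smul_apply,
        hEsub, Pi.add_apply, Pi.smul_apply, he, Pi.single_apply]
      simp only [hA, Matrix.submatrix_apply, smul_eq_mul]
      by_cases hy : y = i' <;> simp [hy] <;> ring
    · rw [Matrix.submatrix_apply, Matrix.updateRow_ne hx, Matrix.add_apply, Matrix.smul_apply,
        hEsub]
      simp [hx, hA]
  -- the cofactor as a function of `t` is affine
  have haff : ∀ t : ℝ, cofactor (L + t • tangentE i j) a b = A.det - t * A.adjugate i' i' := by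
    intro t
    rw [cofactor_const _ (hEsymm t) (hErow t) a b j j]
    rw [cofactor]
    have hpow : (-1 : ℝ) ^ ((j : ℕ) + (j : ℕ)) = 1 := Even.neg_one_pow ⟨(j : ℕ), rfl⟩
    rw [hpow, one_mul, hsub t, Matrix.det_updateRow_add, Matrix.det_updateRow_smul,
      Matrix.updateRow_eq_self, he, Matrix.adjugate_apply]
    ring
  -- compute the derivative
  have hderiv : deriv (fun t : ℝ => cofactor (L + t • tangentE i j) a b) 0
      = -A.adjugate i' i' := by
    have h1 : (fun t : ℝ => cofactor (L + t • tangentE i j) a b)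
        = fun t : ℝ => A.det - t * A.adjugate i' i' := funext haff
    rw [h1]
    have h2 : HasDerivAt (fun t : ℝ => A.det - t * A.adjugate i' i')
        (-A.adjugate i' i') 0 := by
      simpa using ((hasDerivAt_id (0 : ℝ)).mul_const (A.adjugate i' i')).const_sub A.det
    exact h2.deriv
  rw [hderiv]
  -- identify the adjugate entry with the cofactor of `L'`
  have hL'symm : L'.IsSymm := by
    apply Matrix.IsSymm.ext
    intro x y
    simp only [hL', Matrix.submatrix_apply, addRowCol, Matrix.of_apply]
    rw [hLs (j.succAbove y) (j.succAbove x), hLs j (j.succAbove x), hLs (j.succAbove y) j]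
    by_cases h1 : j.succAbove x = i <;> by_cases h2 : j.succAbove y = i <;> simp [h1, h2] <;> ring
  have hL'row : ∀ x, ∑ y, L' x y = 0 := by
    intro x
    have hsum := Fin.sum_univ_succAbove (fun b => addRowCol L i j (j.succAbove x) b) j
    have htot : ∑ c, addRowCol L i j (j.succAbove x) c
        = L (j.succAbove x) j + (if j.succAbove x = i then L j j else 0) := by
      simp only [addRowCol, Matrix.of_apply]
      rw [Finset.sum_add_distrib, Finset.sum_add_distrib, hrow (j.succAbove x)]
      rw [Finset.sum_ite_eq' Finset.univ i (fun _ => L (j.succAbove x) j +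
        (if j.succAbove x = i then L j j else 0))]
      by_cases hx : j.succAbove x = i <;> simp [hx, hrow j]
    have hj' : addRowCol L i j (j.succAbove x) j
        = L (j.succAbove x) j + (if j.succAbove x = i then L j j else 0) := by
      simp only [addRowCol, Matrix.of_apply]
      simp [hne']
    have : ∑ y, L' x y = ∑ y, addRowCol L i j (j.succAbove x) (j.succAbove y) := by
      simp [hL']
    rw [this]
    rw [htot, hj'] at hsum
    linarith
  rw [cofactor_const _ hL'symm hL'row a' b' i' i']
  -- the (i',i') minors of `L'` and `A` coincide
  have hminor : L'.submatrix i'.succAbove i'.succAbove = A.submatrix i'.succAbove i'.succAbove := by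
    ext x y
    have hx_ne : i'.succAbove x ≠ i' := Fin.succAbove_ne i' x
    have hy_ne : i'.succAbove y ≠ i' := Fin.succAbove_ne i' y
    have hx2 : j.succAbove (i'.succAbove x) ≠ i := by
      rw [← hji', Ne, Fin.succAbove_right_inj]; exact hx_ne
    have hy2 : j.succAbove (i'.succAbove y) ≠ i := by
      rw [← hji', Ne, Fin.succAbove_right_inj]; exact hy_ne
    simp [hL', hA, addRowCol, hx2, hy2]
  have : cofactor L' i' i' = A.adjugate i' i' := by
    rw [cofactor, hminor, ← cofactor, cofactor_eq_adjugate_s7]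
  rw [this]
end

section
/- For an n×n Laplace-like matrix L and indices i < j, the directional derivative of the tree-sum T(L) = Σ_τ A_τ(L) along v_{ij} = ∂/∂L_{ij} + ∂/∂L_{ji} − ∂/∂L_{ii} − ∂/∂L_{jj} equals T(L'), where L' = M_{jj}(L_+) and L_+ is obtained from L by adding row j to row i and column j to column i; equivalently, d/dt T(L + t E_{ij})|_{t=0} = T(L'), where E_{ij} has entries +1 at (i,j),(j,i), −1 at (i,i),(j,j), and 0 elsewhere. -/
open scoped Classical

/-! ## Auxiliary lemmas -/

open SimpleGraph Finset


lemma walk_lift {V W : Type*} {G : SimpleGraph V} {H : SimpleGraph W} (f : V → W)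
    (hf : ∀ a b, G.Adj a b → H.Reachable (f a) (f b)) {u v : V} (p : G.Walk u v) :
    H.Reachable (f u) (f v) := by
  induction p with
  | nil => exact Reachable.refl _
  | cons h p ih => exact (hf _ _ h).trans ih

lemma no_triangle {V : Type*} {G : SimpleGraph V} (hA : G.IsAcyclic) {a b c : V}
    (h1 : G.Adj a b) (h2 : G.Adj b c) (h3 : G.Adj a c) : False := by
  have hp1 : (SimpleGraph.Walk.cons h3 SimpleGraph.Walk.nil).IsPath := by
    simp [SimpleGraph.Walk.isPath_def, h3.ne]
  have hab := h1.ne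
  have hbc := h2.ne
  have hac := h3.ne
  have hp2 : (SimpleGraph.Walk.cons h1 (SimpleGraph.Walk.cons h2 SimpleGraph.Walk.nil)).IsPath := by
    simp [SimpleGraph.Walk.isPath_def, hab, hbc, hac]
  have := hA.path_unique ⟨_, hp1⟩ ⟨_, hp2⟩
  have hlen := congrArg (fun p : G.Path a c => p.1.length) this
  simp at hlen

lemma card_le_of_connected {V : Type*} [Fintype V] {G : SimpleGraph V} (hG : G.Connected) :
    Fintype.card V ≤ G.edgeFinset.card + 1 := by
  classical
  obtain ⟨u₀⟩ := hG.nonempty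
  have key : ∀ w : V, w ≠ u₀ → ∃ x, G.Adj w x ∧ G.dist x u₀ + 1 = G.dist w u₀ := by
    intro w hw
    obtain ⟨p, hp⟩ := hG.exists_walk_length_eq_dist w u₀
    cases p with
    | nil => exact absurd rfl hw
    | @cons _ x _ h q =>
      refine ⟨x, h, ?_⟩
      have h1 : G.dist x u₀ ≤ q.length := SimpleGraph.dist_le q
      have h2 : G.dist w u₀ ≤ G.dist w x + G.dist x u₀ := hG.dist_triangle
      have h3 : G.dist w x ≤ 1 := by
        simpa using SimpleGraph.dist_le (SimpleGraph.Walk.cons h SimpleGraph.Walk.nil)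
      simp only [SimpleGraph.Walk.length_cons] at hp
      omega
  choose nxt hadj hdist using key
  have hinj : Function.Injective
      (fun w : {w : V // w ≠ u₀} => (⟨s(w.1, nxt w.1 w.2), by
        simp [SimpleGraph.mem_edgeFinset, hadj w.1 w.2]⟩ : {e // e ∈ G.edgeFinset})) := by
    rintro ⟨w, hw⟩ ⟨w', hw'⟩ h
    simp only [Subtype.mk.injEq, Sym2.eq_iff] at h
    rcases h with ⟨h1, h2⟩ | ⟨h1, h2⟩
    · simp [h1]
    · exfalso
      have d1 := hdist w hw
      have d2 := hdist w' hw'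
      rw [h2] at d1
      rw [← h1] at d2
      omega
  have hcard := Fintype.card_le_of_injective _ hinj
  simp only [Fintype.card_coe] at hcard
  have h1 : Fintype.card {w : V // w ≠ u₀} = Fintype.card V - 1 := by
    have := Fintype.card_subtype_compl (fun w : V => w = u₀)
    simpa [Fintype.card_subtype_eq] using this
  have h2 : 1 ≤ Fintype.card V := Fintype.card_pos_iff.mpr ⟨u₀⟩
  omega

lemma isAcyclic_of_card {V : Type*} [Fintype V] {G : SimpleGraph V} (hG : G.Connected)
    (hcard : G.edgeFinset.card + 1 ≤ Fintype.card V) : G.IsAcyclic := by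
  classical
  intro u c hc
  cases c with
  | nil => exact hc.ne_nil rfl
  | @cons _ x _ hvx q =>
    set e := s(u, x) with he
    have hmem : e ∈ (SimpleGraph.Walk.cons hvx q).edges := by
      simp [SimpleGraph.Walk.edges_cons, he]
    have hnb : ¬ G.IsBridge e := by
      rw [SimpleGraph.isBridge_iff_adj_and_forall_cycle_notMem]
      push_neg
      exact ⟨u, _, hc, hmem⟩
      exact hvx
    rw [SimpleGraph.isBridge_iff] at hnb
    push_neg at hnb
    have hreach : (G \ SimpleGraph.fromEdgeSet {e}).Reachable u x := hnb
    set G' := G \ SimpleGraph.fromEdgeSet {e} with hG'def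
    have hstep : ∀ a b, G.Adj a b → G'.Reachable a b := by
      intro a b hab
      by_cases habe : s(a, b) = e
      · rw [Sym2.eq_iff] at habe
        rcases habe with ⟨rfl, rfl⟩ | ⟨rfl, rfl⟩
        · exact hreach
        · exact hreach.symm
      · refine SimpleGraph.Adj.reachable ?_
        rw [hG'def, SimpleGraph.sdiff_adj, SimpleGraph.fromEdgeSet_adj]
        exact ⟨hab, by simp [habe]⟩
    have hG'conn : G'.Connected := by
      have := hG.nonempty
      refine SimpleGraph.Connected.mk fun a b => ?_
      exact (hG.preconnected a b).elim fun p => walk_lift id hstep p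
    have hedge : G'.edgeFinset = G.edgeFinset.erase e := by
      ext e'
      simp only [SimpleGraph.mem_edgeFinset, Finset.mem_erase, hG'def,
        SimpleGraph.edgeSet_sdiff, SimpleGraph.edgeSet_fromEdgeSet, Set.mem_diff,
        Set.mem_setOf_eq, Set.mem_singleton_iff]
      constructor
      · rintro ⟨h1, h2⟩
        refine ⟨fun hh => h2 ⟨hh, ?_⟩, h1⟩
        rw [hh, he]
        simp [hvx.ne]
      · rintro ⟨h1, h2⟩
        exact ⟨h2, fun hh => h1 hh.1⟩
    have hmem' : e ∈ G.edgeFinset := by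
      simp [SimpleGraph.mem_edgeFinset, he, hvx]
    have hcard' := card_le_of_connected hG'conn
    have h1 : ∀ (inst : Fintype G'.edgeSet),
        (@SimpleGraph.edgeFinset V G' inst).card = G'.edgeSet.ncard := fun inst =>
      (@Set.ncard_eq_toFinset_card' _ G'.edgeSet inst).symm
    have h2 := congrArg Finset.card hedge
    simp only [h1] at h2 hcard'
    rw [h2, Finset.card_erase_of_mem hmem'] at hcard'
    have : 1 ≤ G.edgeFinset.card := Finset.card_pos.mpr ⟨e, hmem'⟩
    omega

lemma isTree_of_card {V : Type*} [Fintype V] {G : SimpleGraph V} (hG : G.Connected)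
    (hcard : G.edgeFinset.card + 1 = Fintype.card V) : G.IsTree :=
  ⟨hG, isAcyclic_of_card hG hcard.le⟩

section Setup
variable {n : ℕ}

def iz (i j : Fin (n + 1)) (hij : i < j) : Fin n :=
  ⟨i.1, by have h1 : i.1 < j.1 := hij; have := j.2; omega⟩

lemma f_iz (i j : Fin (n + 1)) (hij : i < j) : j.succAbove (iz i j hij) = i := by
  rw [Fin.succAbove_of_castSucc_lt]
  · ext; simp [iz]
  · rw [Fin.lt_def]; simpa [iz] using hij

lemma f_ne_j (j : Fin (n + 1)) (b : Fin n) : j.succAbove b ≠ j := Fin.succAbove_ne j b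

lemma f_inj (j : Fin (n + 1)) : Function.Injective j.succAbove :=
  Fin.succAbove_right_injective

lemma f_eq_i_iff (i j : Fin (n + 1)) (hij : i < j) (b : Fin n) :
    j.succAbove b = i ↔ b = iz i j hij := by
  constructor
  · intro h; exact f_inj j (by rw [h, f_iz i j hij])
  · rintro rfl; exact f_iz i j hij

noncomputable def gfun (i j : Fin (n + 1)) (hij : i < j) (x : Fin (n + 1)) : Fin n :=
  if h : x = j then iz i j hij else (Fin.exists_succAbove_eq h).choose

lemma f_gfun (i j : Fin (n + 1)) (hij : i < j) {x : Fin (n + 1)} (h : x ≠ j) :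
    j.succAbove (gfun i j hij x) = x := by
  rw [gfun, dif_neg h]; exact (Fin.exists_succAbove_eq h).choose_spec

lemma gfun_f (i j : Fin (n + 1)) (hij : i < j) (b : Fin n) :
    gfun i j hij (j.succAbove b) = b :=
  f_inj j (by rw [f_gfun i j hij (f_ne_j j b)])

lemma gfun_i (i j : Fin (n + 1)) (hij : i < j) : gfun i j hij i = iz i j hij := by
  have := gfun_f i j hij (iz i j hij)
  rwa [f_iz i j hij] at this

lemma gfun_j (i j : Fin (n + 1)) (hij : i < j) : gfun i j hij j = iz i j hij := dif_pos rfl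

def sortPair {α : Type*} [LinearOrder α] (p : α × α) : α × α :=
  if p.1 ≤ p.2 then p else (p.2, p.1)

lemma sortPair_comm {α : Type*} [LinearOrder α] (a b : α) :
    sortPair (a, b) = sortPair (b, a) := by
  unfold sortPair
  rcases lt_trichotomy a b with h | rfl | h
  · rw [if_pos h.le, if_neg (not_le.mpr h)]
  · simp
  · rw [if_neg (not_le.mpr h), if_pos h.le]

lemma sortPair_of_lt {α : Type*} [LinearOrder α] {p : α × α} (h : p.1 < p.2) :
    sortPair p = p := by simp [sortPair, h.le]

lemma sortPair_lt {α : Type*} [LinearOrder α] {p : α × α} (h : p.1 ≠ p.2) :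
    (sortPair p).1 < (sortPair p).2 := by
  unfold sortPair; split_ifs with h1
  · exact lt_of_le_of_ne h1 h
  · simpa using lt_of_not_ge h1

lemma sortPair_cases {α : Type*} [LinearOrder α] (p : α × α) :
    sortPair p = p ∨ sortPair p = (p.2, p.1) := by
  unfold sortPair; split_ifs <;> simp

variable (i j : Fin (n + 1)) (hij : i < j)

def EP (A : Finset (Fin n)) (a b : Fin n) : Fin (n + 1) :=
  if a = iz i j hij then (if b ∈ A then j else i) else j.succAbove a

lemma EP_mem (A : Finset (Fin n)) {a : Fin n} (b : Fin n) (ha : a = iz i j hij) :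
    EP i j hij A a b = i ∨ EP i j hij A a b = j := by
  rw [EP, if_pos ha]; split_ifs <;> simp

lemma EP_not_mem (A : Finset (Fin n)) {a : Fin n} (b : Fin n) (ha : a ≠ iz i j hij) :
    EP i j hij A a b ≠ i ∧ EP i j hij A a b ≠ j := by
  rw [EP, if_neg ha]
  exact ⟨fun h => ha ((f_eq_i_iff i j hij a).mp h), f_ne_j j a⟩

lemma EP_ne (A : Finset (Fin n)) {a b : Fin n} (hab : a ≠ b) :
    EP i j hij A a b ≠ EP i j hij A b a := by
  by_cases ha : a = iz i j hij
  · have hb : b ≠ iz i j hij := fun h => hab (ha.trans h.symm)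
    intro h
    rcases EP_mem i j hij A b ha with h1 | h1 <;> rw [h1] at h
    · exact (EP_not_mem i j hij A a hb).1 h.symm
    · exact (EP_not_mem i j hij A a hb).2 h.symm
  · by_cases hb : b = iz i j hij
    · intro h
      rcases EP_mem i j hij A a hb with h1 | h1 <;> rw [h1] at h
      · exact (EP_not_mem i j hij A b ha).1 h
      · exact (EP_not_mem i j hij A b ha).2 h
    · rw [EP, if_neg ha, EP, if_neg hb]
      exact fun h => hab (f_inj j h)

lemma gfun_EP (A : Finset (Fin n)) (a b : Fin n) :
    gfun i j hij (EP i j hij A a b) = a := by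
  rw [EP]
  split_ifs with ha hb
  · rw [ha, gfun_j]
  · rw [ha, gfun_i]
  · exact gfun_f i j hij a

def Phi (A : Finset (Fin n)) (σ : SimpleGraph (Fin n)) : SimpleGraph (Fin (n + 1)) where
  Adj x y := (x = i ∧ y = j) ∨ (x = j ∧ y = i) ∨
    ∃ a b, σ.Adj a b ∧ x = EP i j hij A a b ∧ y = EP i j hij A b a
  symm := ⟨by
    rintro x y (⟨rfl, rfl⟩ | ⟨rfl, rfl⟩ | ⟨a, b, hab, rfl, rfl⟩)
    · exact Or.inr (Or.inl ⟨rfl, rfl⟩)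
    · exact Or.inl ⟨rfl, rfl⟩
    · exact Or.inr (Or.inr ⟨b, a, hab.symm, rfl, rfl⟩)⟩
  loopless := ⟨by
    rintro x (⟨rfl, h⟩ | ⟨rfl, h⟩ | ⟨a, b, hab, h1, h2⟩)
    · exact hij.ne h
    · exact hij.ne h.symm
    · exact EP_ne i j hij A hab.ne (h1.symm.trans h2)⟩

def Psi (τ : SimpleGraph (Fin (n + 1))) : SimpleGraph (Fin n) where
  Adj a b := a ≠ b ∧ (τ.Adj (j.succAbove a) (j.succAbove b) ∨
    (a = iz i j hij ∧ τ.Adj j (j.succAbove b)) ∨ (b = iz i j hij ∧ τ.Adj (j.succAbove a) j))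
  symm := ⟨by
    rintro a b ⟨hab, h | ⟨h1, h2⟩ | ⟨h1, h2⟩⟩
    · exact ⟨hab.symm, Or.inl h.symm⟩
    · exact ⟨hab.symm, Or.inr (Or.inr ⟨h1, h2.symm⟩)⟩
    · exact ⟨hab.symm, Or.inr (Or.inl ⟨h1, h2.symm⟩)⟩⟩
  loopless := ⟨fun a h => h.1 rfl⟩

noncomputable def Aof (τ : SimpleGraph (Fin (n + 1))) : Finset (Fin n) :=
  Finset.univ.filter fun b => b ≠ iz i j hij ∧ τ.Adj j (j.succAbove b)

noncomputable def Nbr (σ : SimpleGraph (Fin n)) : Finset (Fin n) :=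
  Finset.univ.filter fun b => σ.Adj (iz i j hij) b

lemma mem_Aof {τ : SimpleGraph (Fin (n + 1))} {b : Fin n} :
    b ∈ Aof i j hij τ ↔ b ≠ iz i j hij ∧ τ.Adj j (j.succAbove b) := by simp [Aof]

lemma mem_Nbr {σ : SimpleGraph (Fin n)} {b : Fin n} :
    b ∈ Nbr i j hij σ ↔ σ.Adj (iz i j hij) b := by simp [Nbr]

noncomputable def Pfin {m : ℕ} (G : SimpleGraph (Fin m)) : Finset (Fin m × Fin m) :=
  Finset.univ.filter fun p => p.1 < p.2 ∧ G.Adj p.1 p.2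

lemma mem_Pfin {m : ℕ} {G : SimpleGraph (Fin m)} {p : Fin m × Fin m} :
    p ∈ Pfin G ↔ p.1 < p.2 ∧ G.Adj p.1 p.2 := by simp [Pfin]

lemma card_Pfin {m : ℕ} (G : SimpleGraph (Fin m)) : (Pfin G).card = G.edgeFinset.card := by
  refine Finset.card_bij (fun p _ => s(p.1, p.2)) ?_ ?_ ?_
  · intro p hp
    rw [mem_Pfin] at hp
    simpa [SimpleGraph.mem_edgeFinset] using hp.2
  · intro p hp q hq h
    rw [mem_Pfin] at hp hq
    rw [Sym2.eq_iff] at h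
    rcases h with ⟨h1, h2⟩ | ⟨h1, h2⟩
    · exact Prod.ext h1 h2
    · exfalso; rw [h1, h2] at hp; exact absurd hq.1 (not_lt.mpr hp.1.le)
  · intro e he
    induction e with
    | _ x y =>
      rw [SimpleGraph.mem_edgeFinset, SimpleGraph.mem_edgeSet] at he
      rcases lt_trichotomy x y with h | h | h
      · exact ⟨(x, y), mem_Pfin.mpr ⟨h, he⟩, rfl⟩
      · exact absurd h he.ne
      · exact ⟨(y, x), mem_Pfin.mpr ⟨h, he.symm⟩, Sym2.eq_swap⟩

noncomputable def mfun (A : Finset (Fin n)) (q : Fin n × Fin n) : Fin (n + 1) × Fin (n + 1) :=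
  sortPair (EP i j hij A q.1 q.2, EP i j hij A q.2 q.1)

noncomputable def m'fun (p : Fin (n + 1) × Fin (n + 1)) : Fin n × Fin n :=
  sortPair (gfun i j hij p.1, gfun i j hij p.2)

lemma m'fun_sortPair (z : Fin (n + 1) × Fin (n + 1)) :
    m'fun i j hij (sortPair z) = m'fun i j hij z := by
  rcases sortPair_cases z with h | h <;> rw [h]
  rw [m'fun, m'fun]
  exact sortPair_comm _ _

lemma mfun_sortPair (A : Finset (Fin n)) (z : Fin n × Fin n) :
    mfun i j hij A (sortPair z) = mfun i j hij A z := by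
  rcases sortPair_cases z with h | h <;> rw [h]
  rw [mfun, mfun]
  exact sortPair_comm _ _

lemma m'fun_mfun (A : Finset (Fin n)) {q : Fin n × Fin n} (hq : q.1 < q.2) :
    m'fun i j hij (mfun i j hij A q) = q := by
  rw [mfun, m'fun_sortPair, m'fun]
  simp only [gfun_EP]
  exact sortPair_of_lt hq


/-! ### decode lemmas -/

lemma adj_sortPair {m : ℕ} {G : SimpleGraph (Fin m)} {z : Fin m × Fin m}
    (h : G.Adj z.1 z.2) : G.Adj (sortPair z).1 (sortPair z).2 := by
  rcases sortPair_cases z with h' | h' <;> rw [h']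
  exacts [h, h.symm]

lemma EP_eq_f (A : Finset (Fin n)) {a' b' a : Fin n}
    (h : EP i j hij A a' b' = j.succAbove a) : a' = a := by
  by_cases ha : a' = iz i j hij
  · rcases EP_mem i j hij A b' ha with h1 | h1 <;> rw [h1] at h
    · rw [ha]; exact ((f_eq_i_iff i j hij a).mp h.symm).symm
    · exact absurd h.symm (f_ne_j j a)
  · rw [EP, if_neg ha] at h
    exact f_inj j h

lemma EP_eq_j (A : Finset (Fin n)) {a' b' : Fin n}
    (h : EP i j hij A a' b' = j) : a' = iz i j hij ∧ b' ∈ A := by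
  by_cases ha : a' = iz i j hij
  · refine ⟨ha, ?_⟩
    rw [EP, if_pos ha] at h
    by_contra hb
    rw [if_neg hb] at h
    exact hij.ne h
  · rw [EP, if_neg ha] at h
    exact absurd h (f_ne_j j a')

lemma EP_eq_i (A : Finset (Fin n)) {a' b' : Fin n}
    (h : EP i j hij A a' b' = i) : a' = iz i j hij ∧ b' ∉ A := by
  by_cases ha : a' = iz i j hij
  · refine ⟨ha, ?_⟩
    rw [EP, if_pos ha] at h
    by_contra hb
    rw [if_pos hb] at h
    exact hij.ne h.symm
  · rw [EP, if_neg ha] at h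
    exact absurd ((f_eq_i_iff i j hij a').mp h) ha

lemma mfun_ne_ij (A : Finset (Fin n)) {q : Fin n × Fin n} (hab : q.1 ≠ q.2) :
    mfun i j hij A q ≠ (i, j) := by
  intro h
  have hcomp : (EP i j hij A q.1 q.2 = i ∨ EP i j hij A q.1 q.2 = j) ∧
      (EP i j hij A q.2 q.1 = i ∨ EP i j hij A q.2 q.1 = j) := by
    rcases sortPair_cases (EP i j hij A q.1 q.2, EP i j hij A q.2 q.1) with h' | h' <;>
      rw [mfun, h'] at h <;> rw [Prod.ext_iff] at h <;> simp only at h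
    · exact ⟨Or.inl h.1, Or.inr h.2⟩
    · exact ⟨Or.inr h.2, Or.inl h.1⟩
  by_cases ha : q.1 = iz i j hij
  · have hb : q.2 ≠ iz i j hij := fun hh => hab (ha.trans hh.symm)
    rcases hcomp.2 with h1 | h1
    · exact (EP_not_mem i j hij A q.1 hb).1 h1
    · exact (EP_not_mem i j hij A q.1 hb).2 h1
  · rcases hcomp.1 with h1 | h1
    · exact (EP_not_mem i j hij A q.2 ha).1 h1
    · exact (EP_not_mem i j hij A q.2 ha).2 h1

/-! ### Setting P : expansion -/

lemma Phi_adj_ij (A : Finset (Fin n)) (σ : SimpleGraph (Fin n)) :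
    (Phi i j hij A σ).Adj i j := Or.inl ⟨rfl, rfl⟩

lemma Psi_Phi {σ : SimpleGraph (Fin n)} {A : Finset (Fin n)} (hA : A ⊆ Nbr i j hij σ) :
    Psi i j hij (Phi i j hij A σ) = σ := by
  ext a b
  constructor
  · rintro ⟨hab, h | ⟨ha, h⟩ | ⟨hb, h⟩⟩
    · rcases h with ⟨h1, h2⟩ | ⟨h1, h2⟩ | ⟨a', b', hadj, h1, h2⟩
      · exact absurd h2 (f_ne_j j b)
      · exact absurd h1 (f_ne_j j a)
      · rwa [EP_eq_f i j hij A h1.symm, EP_eq_f i j hij A h2.symm] at hadj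
    · rcases h with ⟨h1, h2⟩ | ⟨h1, h2⟩ | ⟨a', b', hadj, h1, h2⟩
      · exact absurd h1 hij.ne'
      · exact absurd (ha.trans ((f_eq_i_iff i j hij b).mp h2).symm) hab
      · obtain ⟨ha', _⟩ := EP_eq_j i j hij A h1.symm
        have hb' := EP_eq_f i j hij A h2.symm
        rw [ha', hb'] at hadj
        rwa [ha]
    · rcases h with ⟨h1, h2⟩ | ⟨h1, h2⟩ | ⟨a', b', hadj, h1, h2⟩
      · exact absurd (((f_eq_i_iff i j hij a).mp h1).trans hb.symm) hab
      · exact absurd h1 (f_ne_j j a)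
      · have ha' := EP_eq_f i j hij A h1.symm
        obtain ⟨hb', _⟩ := EP_eq_j i j hij A h2.symm
        rw [ha', hb'] at hadj
        rwa [hb]
  · intro h
    refine ⟨h.ne, ?_⟩
    by_cases ha : a = iz i j hij
    · by_cases hbA : b ∈ A
      · refine Or.inr (Or.inl ⟨ha, ?_⟩)
        have : (Phi i j hij A σ).Adj (EP i j hij A a b) (EP i j hij A b a) :=
          Or.inr (Or.inr ⟨a, b, h, rfl, rfl⟩)
        have hb : b ≠ iz i j hij := fun hh => h.ne' (hh.trans ha.symm)
        rwa [EP, if_pos ha, if_pos hbA, EP, if_neg hb] at this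
      · refine Or.inl ?_
        have : (Phi i j hij A σ).Adj (EP i j hij A a b) (EP i j hij A b a) :=
          Or.inr (Or.inr ⟨a, b, h, rfl, rfl⟩)
        have hb : b ≠ iz i j hij := fun hh => h.ne' (hh.trans ha.symm)
        rw [ha, f_iz i j hij]
        rwa [EP, if_pos ha, if_neg hbA, EP, if_neg hb] at this
    · by_cases hb : b = iz i j hij
      · by_cases haA : a ∈ A
        · refine Or.inr (Or.inr ⟨hb, ?_⟩)
          have : (Phi i j hij A σ).Adj (EP i j hij A a b) (EP i j hij A b a) :=
            Or.inr (Or.inr ⟨a, b, h, rfl, rfl⟩)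
          rwa [EP, if_neg ha, EP, if_pos hb, if_pos haA] at this
        · refine Or.inl ?_
          have : (Phi i j hij A σ).Adj (EP i j hij A a b) (EP i j hij A b a) :=
            Or.inr (Or.inr ⟨a, b, h, rfl, rfl⟩)
          rw [hb, f_iz i j hij]
          rwa [EP, if_neg ha, EP, if_pos hb, if_neg haA] at this
      · refine Or.inl ?_
        have : (Phi i j hij A σ).Adj (EP i j hij A a b) (EP i j hij A b a) :=
          Or.inr (Or.inr ⟨a, b, h, rfl, rfl⟩)
        rwa [EP, if_neg ha, EP, if_neg hb] at this

lemma Aof_Phi {σ : SimpleGraph (Fin n)} {A : Finset (Fin n)} (hA : A ⊆ Nbr i j hij σ) :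
    Aof i j hij (Phi i j hij A σ) = A := by
  ext b
  rw [mem_Aof]
  constructor
  · rintro ⟨hb, h⟩
    rcases h with ⟨h1, h2⟩ | ⟨h1, h2⟩ | ⟨a', b', hadj, h1, h2⟩
    · exact absurd h1 hij.ne'
    · exact absurd ((f_eq_i_iff i j hij b).mp h2) hb
    · obtain ⟨ha', hbA'⟩ := EP_eq_j i j hij A h1.symm
      rwa [← EP_eq_f i j hij A h2.symm]
  · intro hbA
    have hadj : σ.Adj (iz i j hij) b := mem_Nbr i j hij |>.mp (hA hbA)
    refine ⟨hadj.ne', ?_⟩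
    have : (Phi i j hij A σ).Adj (EP i j hij A (iz i j hij) b) (EP i j hij A b (iz i j hij)) :=
      Or.inr (Or.inr ⟨_, _, hadj, rfl, rfl⟩)
    rwa [EP, if_pos rfl, if_pos hbA, EP, if_neg hadj.ne'] at this

lemma Phi_conn {σ : SimpleGraph (Fin n)} (A : Finset (Fin n)) (hσ : σ.Connected) :
    (Phi i j hij A σ).Connected := by
  have hEP : ∀ a b : Fin n,
      (Phi i j hij A σ).Reachable (j.succAbove a) (EP i j hij A a b) := by
    intro a b
    by_cases ha : a = iz i j hij
    · rcases EP_mem i j hij A b ha with h1 | h1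
      · rw [h1, ha, f_iz i j hij]
      · rw [h1, ha, f_iz i j hij]
        exact (Phi_adj_ij i j hij A σ).reachable
    · rw [EP, if_neg ha]
  have hstep : ∀ a b : Fin n, σ.Adj a b →
      (Phi i j hij A σ).Reachable (j.succAbove a) (j.succAbove b) := by
    intro a b h
    have hmid : (Phi i j hij A σ).Adj (EP i j hij A a b) (EP i j hij A b a) :=
      Or.inr (Or.inr ⟨a, b, h, rfl, rfl⟩)
    exact ((hEP a b).trans hmid.reachable).trans (hEP b a).symm
  have hto : ∀ x : Fin (n + 1), (Phi i j hij A σ).Reachable i x := by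
    intro x
    by_cases hx : x = j
    · rw [hx]; exact (Phi_adj_ij i j hij A σ).reachable
    · obtain ⟨b, hb⟩ := Fin.exists_succAbove_eq hx
      obtain ⟨p⟩ := hσ.preconnected (iz i j hij) b
      have := walk_lift _ hstep p
      rwa [f_iz i j hij, hb] at this
  exact SimpleGraph.Connected.mk fun x y => (hto x).symm.trans (hto y)


/-! ### Setting P : counting -/

lemma mfun_mem_P {σ : SimpleGraph (Fin n)} {A : Finset (Fin n)} {q : Fin n × Fin n}
    (hq : q ∈ Pfin σ) : mfun i j hij A q ∈ (Pfin (Phi i j hij A σ)).erase (i, j) := by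
  rw [mem_Pfin] at hq
  refine Finset.mem_erase.mpr ⟨mfun_ne_ij i j hij A hq.2.ne, ?_⟩
  rw [mem_Pfin, mfun]
  exact ⟨sortPair_lt (EP_ne i j hij A hq.2.ne),
    adj_sortPair (Or.inr (Or.inr ⟨q.1, q.2, hq.2, rfl, rfl⟩))⟩

lemma m'fun_spec_P {σ : SimpleGraph (Fin n)} {A : Finset (Fin n)}
    {p : Fin (n + 1) × Fin (n + 1)} (hp : p ∈ (Pfin (Phi i j hij A σ)).erase (i, j)) :
    m'fun i j hij p ∈ Pfin σ ∧ mfun i j hij A (m'fun i j hij p) = p := by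
  obtain ⟨hne, hp⟩ := Finset.mem_erase.mp hp
  rw [mem_Pfin] at hp
  obtain ⟨hlt, hadj⟩ := hp
  rcases hadj with ⟨h1, h2⟩ | ⟨h1, h2⟩ | ⟨a, b, hab, h1, h2⟩
  · exact absurd (Prod.ext h1 h2) hne
  · rw [h1, h2] at hlt
    exact absurd hij (lt_asymm hlt)
  · constructor
    · rw [m'fun, h1, h2, gfun_EP, gfun_EP]
      exact mem_Pfin.mpr ⟨sortPair_lt hab.ne, adj_sortPair hab⟩
    · rw [m'fun, h1, h2, gfun_EP, gfun_EP, mfun_sortPair, mfun]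
      simp only [← h1, ← h2, Prod.mk.eta]
      exact sortPair_of_lt hlt

lemma Phi_card (σ : SimpleGraph (Fin n)) (A : Finset (Fin n)) :
    (Pfin (Phi i j hij A σ)).card = (Pfin σ).card + 1 := by
  have hmem : (i, j) ∈ Pfin (Phi i j hij A σ) := mem_Pfin.mpr ⟨hij, Phi_adj_ij i j hij A σ⟩
  have h2 : ((Pfin (Phi i j hij A σ)).erase (i, j)).card = (Pfin σ).card := by
    refine Finset.card_nbij' (m'fun i j hij) (mfun i j hij A)
      (fun p hp => (m'fun_spec_P i j hij hp).1) (fun q hq => mfun_mem_P i j hij hq)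
      (fun p hp => (m'fun_spec_P i j hij hp).2)
      (fun q hq => m'fun_mfun i j hij A (mem_Pfin.mp hq).1)
  have h3 := Finset.card_erase_of_mem hmem
  have h4 : 0 < (Pfin (Phi i j hij A σ)).card := Finset.card_pos.mpr ⟨_, hmem⟩
  omega

lemma Phi_isTree {σ : SimpleGraph (Fin n)} {A : Finset (Fin n)} (hσ : σ.IsTree) :
    (Phi i j hij A σ).IsTree := by
  refine isTree_of_card (Phi_conn i j hij A hσ.isConnected) ?_
  have h1 := hσ.card_edgeFinset
  rw [Fintype.card_fin] at h1
  have h2 := card_Pfin σ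
  have h3 := card_Pfin (Phi i j hij A σ)
  have h4 := Phi_card i j hij σ A
  rw [Fintype.card_fin]
  omega

/-! ### Setting Q -/

lemma no_double {τ : SimpleGraph (Fin (n + 1))} (hacyc : τ.IsAcyclic) (hτij : τ.Adj i j)
    {x : Fin (n + 1)} (h1 : τ.Adj i x) (h2 : τ.Adj j x) : False :=
  no_triangle hacyc hτij h2 h1

lemma Q_adjA {τ : SimpleGraph (Fin (n + 1))} (hτij : τ.Adj i j)
    {a b : Fin n} (h : (Psi i j hij τ).Adj a b) :
    τ.Adj (EP i j hij (Aof i j hij τ) a b) (EP i j hij (Aof i j hij τ) b a) := by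
  suffices H : ∀ a b : Fin n, (Psi i j hij τ).Adj a b → a = iz i j hij →
      τ.Adj (EP i j hij (Aof i j hij τ) a b) (EP i j hij (Aof i j hij τ) b a) by
    by_cases ha : a = iz i j hij
    · exact H a b h ha
    · by_cases hb : b = iz i j hij
      · exact (H b a h.symm hb).symm
      · obtain ⟨hab, hcl⟩ := h
        rw [EP, if_neg ha, EP, if_neg hb]
        rcases hcl with h1 | ⟨h1, _⟩ | ⟨h1, _⟩
        · exact h1
        · exact absurd h1 ha
        · exact absurd h1 hb
  intro a b h ha
  obtain ⟨hab, hcl⟩ := h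
  have hb : b ≠ iz i j hij := fun hh => hab (ha.trans hh.symm)
  rw [EP, if_pos ha, EP, if_neg hb]
  by_cases hbA : b ∈ Aof i j hij τ
  · rw [if_pos hbA]
    exact ((mem_Aof i j hij).mp hbA).2
  · rw [if_neg hbA]
    rcases hcl with h1 | ⟨_, h2⟩ | ⟨h1, _⟩
    · rwa [ha, f_iz i j hij] at h1
    · exact absurd ((mem_Aof i j hij).mpr ⟨hb, h2⟩) hbA
    · exact absurd h1 hb

lemma Q_proj_aux {τ : SimpleGraph (Fin (n + 1))} {x y : Fin (n + 1)}
    (hadj : τ.Adj x y) (hx : x = i ∨ x = j) (hy1 : y ≠ i) (hy2 : y ≠ j) :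
    (Psi i j hij τ).Adj (gfun i j hij x) (gfun i j hij y) := by
  obtain ⟨b, hb⟩ := Fin.exists_succAbove_eq hy2
  have hbiz : b ≠ iz i j hij := fun hh => hy1 (by rw [← hb, hh, f_iz i j hij])
  rcases hx with h | h <;> rw [h] at hadj ⊢
  · rw [gfun_i, ← hb, gfun_f]
    refine ⟨fun hh => hbiz hh.symm, Or.inl ?_⟩
    rw [f_iz i j hij, hb]
    exact hadj
  · rw [gfun_j, ← hb, gfun_f]
    refine ⟨fun hh => hbiz hh.symm, Or.inr (Or.inl ⟨rfl, ?_⟩)⟩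
    rw [hb]
    exact hadj

lemma Q_proj {τ : SimpleGraph (Fin (n + 1))} {x y : Fin (n + 1)}
    (hadj : τ.Adj x y) (h1 : ¬(x = i ∧ y = j)) (h2 : ¬(x = j ∧ y = i)) :
    (Psi i j hij τ).Adj (gfun i j hij x) (gfun i j hij y) := by
  by_cases hxi : x = i
  · rw [hxi] at hadj ⊢
    exact Q_proj_aux i j hij hadj (Or.inl rfl) hadj.ne' fun hh => h1 ⟨hxi, hh⟩
  · by_cases hxj : x = j
    · rw [hxj] at hadj ⊢
      exact Q_proj_aux i j hij hadj (Or.inr rfl) (fun hh => h2 ⟨hxj, hh⟩) hadj.ne'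
    · by_cases hyi : y = i
      · rw [hyi] at hadj ⊢
        exact (Q_proj_aux i j hij hadj.symm (Or.inl rfl) hxi hxj).symm
      · by_cases hyj : y = j
        · rw [hyj] at hadj ⊢
          exact (Q_proj_aux i j hij hadj.symm (Or.inr rfl) hxi hxj).symm
        · obtain ⟨b, hb⟩ := Fin.exists_succAbove_eq hxj
          obtain ⟨c, hc⟩ := Fin.exists_succAbove_eq hyj
          rw [← hb, ← hc, gfun_f, gfun_f]
          refine ⟨fun hh => hadj.ne ?_, Or.inl ?_⟩
          · rw [← hb, ← hc, hh]
          · rw [hb, hc]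
            exact hadj

lemma Q_EP_g {τ : SimpleGraph (Fin (n + 1))} (hacyc : τ.IsAcyclic) (hτij : τ.Adj i j)
    {x y : Fin (n + 1)} (hadj : τ.Adj x y) (h1 : ¬(x = i ∧ y = j)) (h2 : ¬(x = j ∧ y = i)) :
    EP i j hij (Aof i j hij τ) (gfun i j hij x) (gfun i j hij y) = x := by
  by_cases hxi : x = i
  · rw [hxi] at hadj ⊢
    have hyj : y ≠ j := fun hh => h1 ⟨hxi, hh⟩
    obtain ⟨b, hb⟩ := Fin.exists_succAbove_eq hyj
    have hbA : b ∉ Aof i j hij τ := by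
      intro hA
      have := ((mem_Aof i j hij).mp hA).2
      rw [hb] at this
      exact no_double i j hacyc hτij hadj this
    rw [gfun_i, ← hb, gfun_f, EP, if_pos rfl, if_neg hbA]
  · by_cases hxj : x = j
    · rw [hxj] at hadj ⊢
      have hyi : y ≠ i := fun hh => h2 ⟨hxj, hh⟩
      obtain ⟨b, hb⟩ := Fin.exists_succAbove_eq hadj.ne'
      have hbiz : b ≠ iz i j hij := fun hh => hyi (by rw [← hb, hh, f_iz i j hij])
      have hbA : b ∈ Aof i j hij τ := (mem_Aof i j hij).mpr ⟨hbiz, by rw [hb]; exact hadj⟩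
      rw [gfun_j, ← hb, gfun_f, EP, if_pos rfl, if_pos hbA]
    · obtain ⟨a, ha⟩ := Fin.exists_succAbove_eq hxj
      have haiz : a ≠ iz i j hij := fun hh => hxi (by rw [← ha, hh, f_iz i j hij])
      rw [← ha, gfun_f, EP, if_neg haiz]

lemma Phi_Psi {τ : SimpleGraph (Fin (n + 1))} (hacyc : τ.IsAcyclic) (hτij : τ.Adj i j) :
    Phi i j hij (Aof i j hij τ) (Psi i j hij τ) = τ := by
  ext x y
  constructor
  · rintro (⟨rfl, rfl⟩ | ⟨rfl, rfl⟩ | ⟨a, b, hadj, rfl, rfl⟩)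
    · exact hτij
    · exact hτij.symm
    · exact Q_adjA i j hij hτij hadj
  · intro h
    by_cases h1 : x = i ∧ y = j
    · exact Or.inl h1
    · by_cases h2 : x = j ∧ y = i
      · exact Or.inr (Or.inl h2)
      · exact Or.inr (Or.inr ⟨gfun i j hij x, gfun i j hij y, Q_proj i j hij h h1 h2,
          (Q_EP_g i j hij hacyc hτij h h1 h2).symm,
          (Q_EP_g i j hij hacyc hτij h.symm (fun hh => h2 ⟨hh.2, hh.1⟩)
            (fun hh => h1 ⟨hh.2, hh.1⟩)).symm⟩)

lemma Psi_conn {τ : SimpleGraph (Fin (n + 1))} (hτ : τ.Connected) (hτij : τ.Adj i j) :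
    (Psi i j hij τ).Connected := by
  have hnon : Nonempty (Fin n) := ⟨iz i j hij⟩
  have hstep : ∀ x y : Fin (n + 1), τ.Adj x y →
      (Psi i j hij τ).Reachable (gfun i j hij x) (gfun i j hij y) := by
    intro x y h
    by_cases h1 : x = i ∧ y = j
    · obtain ⟨rfl, rfl⟩ := h1
      rw [gfun_i, gfun_j]
    · by_cases h2 : x = j ∧ y = i
      · obtain ⟨rfl, rfl⟩ := h2
        rw [gfun_j, gfun_i]
      · exact (Q_proj i j hij h h1 h2).reachable
  refine SimpleGraph.Connected.mk fun a b => ?_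
  obtain ⟨p⟩ := hτ.preconnected (j.succAbove a) (j.succAbove b)
  have := walk_lift _ hstep p
  rwa [gfun_f, gfun_f] at this

lemma m'fun_spec_Q {τ : SimpleGraph (Fin (n + 1))} (hacyc : τ.IsAcyclic) (hτij : τ.Adj i j)
    {p : Fin (n + 1) × Fin (n + 1)} (hp : p ∈ (Pfin τ).erase (i, j)) :
    m'fun i j hij p ∈ Pfin (Psi i j hij τ) ∧ mfun i j hij (Aof i j hij τ) (m'fun i j hij p) = p := by
  obtain ⟨hne, hp⟩ := Finset.mem_erase.mp hp
  rw [mem_Pfin] at hp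
  obtain ⟨hlt, hadj⟩ := hp
  have h1 : ¬(p.1 = i ∧ p.2 = j) := fun hh => hne (Prod.ext hh.1 hh.2)
  have h2 : ¬(p.1 = j ∧ p.2 = i) := by
    rintro ⟨a1, a2⟩
    rw [a1, a2] at hlt
    exact absurd hij (lt_asymm hlt)
  have hP := Q_proj i j hij hadj h1 h2
  constructor
  · rw [m'fun]
    exact mem_Pfin.mpr ⟨sortPair_lt hP.ne, adj_sortPair hP⟩
  · rw [m'fun, mfun_sortPair, mfun]
    rw [Q_EP_g i j hij hacyc hτij hadj h1 h2,
      Q_EP_g i j hij hacyc hτij hadj.symm (fun hh => h2 ⟨hh.2, hh.1⟩)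
        (fun hh => h1 ⟨hh.2, hh.1⟩)]
    rw [Prod.mk.eta]
    exact sortPair_of_lt hlt

lemma mfun_mem_Q {τ : SimpleGraph (Fin (n + 1))} (hτij : τ.Adj i j)
    {q : Fin n × Fin n} (hq : q ∈ Pfin (Psi i j hij τ)) :
    mfun i j hij (Aof i j hij τ) q ∈ (Pfin τ).erase (i, j) := by
  rw [mem_Pfin] at hq
  refine Finset.mem_erase.mpr ⟨mfun_ne_ij i j hij _ hq.2.ne, ?_⟩
  rw [mem_Pfin, mfun]
  exact ⟨sortPair_lt (EP_ne i j hij _ hq.2.ne), adj_sortPair (Q_adjA i j hij hτij hq.2)⟩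

lemma Psi_card {τ : SimpleGraph (Fin (n + 1))} (hacyc : τ.IsAcyclic) (hτij : τ.Adj i j) :
    (Pfin τ).card = (Pfin (Psi i j hij τ)).card + 1 := by
  have hmem : (i, j) ∈ Pfin τ := mem_Pfin.mpr ⟨hij, hτij⟩
  have h2 : ((Pfin τ).erase (i, j)).card = (Pfin (Psi i j hij τ)).card := by
    refine Finset.card_nbij' (m'fun i j hij) (mfun i j hij (Aof i j hij τ))
      (fun p hp => (m'fun_spec_Q i j hij hacyc hτij hp).1)
      (fun q hq => mfun_mem_Q i j hij hτij hq)
      (fun p hp => (m'fun_spec_Q i j hij hacyc hτij hp).2)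
      (fun q hq => m'fun_mfun i j hij _ (mem_Pfin.mp hq).1)
  have h3 := Finset.card_erase_of_mem hmem
  have h4 : 0 < (Pfin τ).card := Finset.card_pos.mpr ⟨_, hmem⟩
  omega

lemma Psi_isTree {τ : SimpleGraph (Fin (n + 1))} (hτ : τ.IsTree) (hτij : τ.Adj i j) :
    (Psi i j hij τ).IsTree := by
  refine isTree_of_card (Psi_conn i j hij hτ.isConnected hτij) ?_
  have h1 := hτ.card_edgeFinset
  rw [Fintype.card_fin] at h1
  have h2 := card_Pfin τ
  have h3 := card_Pfin (Psi i j hij τ)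
  have h4 := Psi_card i j hij hτ.IsAcyclic hτij
  rw [Fintype.card_fin]
  omega

lemma Aof_subset (τ : SimpleGraph (Fin (n + 1))) :
    Aof i j hij τ ⊆ Nbr i j hij (Psi i j hij τ) := by
  intro b hb
  rw [mem_Aof] at hb
  rw [mem_Nbr]
  exact ⟨fun hh => hb.1 hh.symm, Or.inr (Or.inl ⟨rfl, hb.2⟩)⟩


/-! ### weights -/

lemma L_sort {L : Matrix (Fin (n + 1)) (Fin (n + 1)) ℝ} (hsymm : L.IsSymm)
    (z : Fin (n + 1) × Fin (n + 1)) :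
    L (sortPair z).1 (sortPair z).2 = L z.1 z.2 := by
  rcases sortPair_cases z with h | h <;> rw [h]
  exact hsymm.apply z.1 z.2

noncomputable def LAmp (L : Matrix (Fin (n + 1)) (Fin (n + 1)) ℝ) (A : Finset (Fin n))
    (q : Fin n × Fin n) : ℝ :=
  L (EP i j hij A q.1 q.2) (EP i j hij A q.2 q.1)

lemma weight_eq {L : Matrix (Fin (n + 1)) (Fin (n + 1)) ℝ} (hsymm : L.IsSymm)
    (σ : SimpleGraph (Fin n)) (A : Finset (Fin n)) :
    ∏ q ∈ Pfin σ, LAmp i j hij L A q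
      = ∏ p ∈ (Pfin (Phi i j hij A σ)).erase (i, j), L p.1 p.2 := by
  refine Finset.prod_nbij' (mfun i j hij A) (m'fun i j hij)
    (fun q hq => mfun_mem_P i j hij hq)
    (fun p hp => (m'fun_spec_P i j hij hp).1)
    (fun q hq => m'fun_mfun i j hij A (mem_Pfin.mp hq).1)
    (fun p hp => (m'fun_spec_P i j hij hp).2)
    (fun q hq => ?_)
  rw [mfun, L_sort hsymm]
  rfl

/-! ### amplitude expansion -/

include hij in
lemma tangentE_val {p : Fin (n + 1) × Fin (n + 1)} (hp : p.1 < p.2) :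
    tangentE i j p.1 p.2 = if p = (i, j) then 1 else 0 := by
  obtain ⟨a, b⟩ := p
  simp only at hp
  rw [tangentE, Matrix.of_apply]
  by_cases h : (a, b) = (i, j)
  · rw [if_pos h]
    rw [Prod.mk.injEq] at h
    rw [h.1, h.2]
    simp [hij.ne, hij.ne']
  · rw [if_neg h]
    rw [Prod.mk.injEq] at h
    have c2 : ¬(a = j ∧ b = i) := by
      rintro ⟨h1, h2⟩; rw [h1, h2] at hp; exact absurd hp (asymm hij)
    have c3 : ¬(a = i ∧ b = i) := by rintro ⟨h1, h2⟩; rw [h1, h2] at hp; exact lt_irrefl _ hp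
    have c4 : ¬(a = j ∧ b = j) := by rintro ⟨h1, h2⟩; rw [h1, h2] at hp; exact lt_irrefl _ hp
    simp [h, c2, c3, c4]

section AmpExp

variable {L : Matrix (Fin (n + 1)) (Fin (n + 1)) ℝ}

lemma M_apply_nn (L : Matrix (Fin (n + 1)) (Fin (n + 1)) ℝ) {a b : Fin n}
    (ha : a ≠ iz i j hij) (hb : b ≠ iz i j hij) :
    ((addRowCol L i j).submatrix j.succAbove j.succAbove) a b
      = L (j.succAbove a) (j.succAbove b) := by
  have ha' : j.succAbove a ≠ i := fun hh => ha ((f_eq_i_iff i j hij a).mp hh)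
  have hb' : j.succAbove b ≠ i := fun hh => hb ((f_eq_i_iff i j hij b).mp hh)
  simp [addRowCol, Matrix.submatrix_apply, ha', hb']

lemma M_apply_iz (L : Matrix (Fin (n + 1)) (Fin (n + 1)) ℝ) {b : Fin n}
    (hb : b ≠ iz i j hij) :
    ((addRowCol L i j).submatrix j.succAbove j.succAbove) (iz i j hij) b
      = L i (j.succAbove b) + L j (j.succAbove b) := by
  have hb' : j.succAbove b ≠ i := fun hh => hb ((f_eq_i_iff i j hij b).mp hh)
  simp [addRowCol, Matrix.submatrix_apply, f_iz i j hij, hb']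

lemma M_apply_iz' (L : Matrix (Fin (n + 1)) (Fin (n + 1)) ℝ) {a : Fin n}
    (ha : a ≠ iz i j hij) :
    ((addRowCol L i j).submatrix j.succAbove j.succAbove) a (iz i j hij)
      = L (j.succAbove a) i + L (j.succAbove a) j := by
  have ha' : j.succAbove a ≠ i := fun hh => ha ((f_eq_i_iff i j hij a).mp hh)
  simp [addRowCol, Matrix.submatrix_apply, f_iz i j hij, ha']

lemma prod_I_eq (hsymm : L.IsSymm) (σ : SimpleGraph (Fin n))
    (F : Fin n → ℝ)
    (hF : ∀ b, b ≠ iz i j hij →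
      F b = ((addRowCol L i j).submatrix j.succAbove j.succAbove) (iz i j hij) b) :
    ∏ q ∈ (Pfin σ).filter (fun q => q.1 = iz i j hij ∨ q.2 = iz i j hij),
        ((addRowCol L i j).submatrix j.succAbove j.succAbove) q.1 q.2
      = ∏ b ∈ Nbr i j hij σ, F b := by
  refine Finset.prod_nbij' (fun q => if q.1 = iz i j hij then q.2 else q.1)
    (fun b => if iz i j hij < b then (iz i j hij, b) else (b, iz i j hij))
    ?_ ?_ ?_ ?_ ?_
  · intro q hq
    rw [Finset.mem_filter, mem_Pfin] at hq
    obtain ⟨⟨hlt, hadj⟩, hiz⟩ := hq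
    rw [mem_Nbr]
    rcases hiz with h | h
    · rw [if_pos h, ← h]; exact hadj
    · rw [if_neg (fun hh => hadj.ne (hh.trans h.symm)), ← h]; exact hadj.symm
  · intro b hb
    rw [mem_Nbr] at hb
    rw [Finset.mem_filter, mem_Pfin]
    by_cases h : iz i j hij < b
    · rw [if_pos h]; exact ⟨⟨h, hb⟩, Or.inl rfl⟩
    · rw [if_neg h]
      refine ⟨⟨lt_of_le_of_ne (not_lt.mp h) hb.ne', hb.symm⟩, Or.inr rfl⟩
  · intro q hq
    rw [Finset.mem_filter, mem_Pfin] at hq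
    obtain ⟨⟨hlt, hadj⟩, hiz⟩ := hq
    rcases hiz with h | h
    · rw [if_pos h, if_pos (h ▸ hlt)]
      exact Prod.ext h.symm rfl
    · have h1 : ¬(q.1 = iz i j hij) := fun hh => hadj.ne (hh.trans h.symm)
      rw [if_neg h1, if_neg (show ¬(iz i j hij < q.1) by rw [← h]; exact not_lt.mpr hlt.le)]
      exact Prod.ext rfl h.symm
  · intro b hb
    rw [mem_Nbr] at hb
    by_cases h : iz i j hij < b
    · rw [if_pos h]; simp
    · rw [if_neg h]; simp [hb.ne']
  · intro q hq
    rw [Finset.mem_filter, mem_Pfin] at hq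
    obtain ⟨⟨hlt, hadj⟩, hiz⟩ := hq
    rcases hiz with h | h
    · have h2 : q.2 ≠ iz i j hij := fun hh => hadj.ne (h.trans hh.symm)
      rw [if_pos h, hF q.2 h2, h]
    · have h1 : q.1 ≠ iz i j hij := fun hh => hadj.ne (hh.trans h.symm)
      rw [if_neg h1, hF q.1 h1, M_apply_iz i j hij L h1]
      have h2 := M_apply_iz' i j hij L (a := q.1) h1
      rw [h, h2, hsymm.apply i (j.succAbove q.1), hsymm.apply j (j.succAbove q.1)]


lemma prod_I_LA (σ : SimpleGraph (Fin n)) (hsymm : L.IsSymm) (A : Finset (Fin n)) :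
    ∏ q ∈ (Pfin σ).filter (fun q => q.1 = iz i j hij ∨ q.2 = iz i j hij), LAmp i j hij L A q
      = ∏ b ∈ Nbr i j hij σ,
          (if b ∈ A then L j (j.succAbove b) else L i (j.succAbove b)) := by
  refine Finset.prod_nbij' (fun q => if q.1 = iz i j hij then q.2 else q.1)
    (fun b => if iz i j hij < b then (iz i j hij, b) else (b, iz i j hij))
    ?_ ?_ ?_ ?_ ?_
  · intro q hq
    rw [Finset.mem_filter, mem_Pfin] at hq
    obtain ⟨⟨hlt, hadj⟩, hiz⟩ := hq
    rw [mem_Nbr]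
    rcases hiz with h | h
    · rw [if_pos h, ← h]; exact hadj
    · rw [if_neg (fun hh => hadj.ne (hh.trans h.symm)), ← h]; exact hadj.symm
  · intro b hb
    rw [mem_Nbr] at hb
    rw [Finset.mem_filter, mem_Pfin]
    by_cases h : iz i j hij < b
    · rw [if_pos h]; exact ⟨⟨h, hb⟩, Or.inl rfl⟩
    · rw [if_neg h]
      refine ⟨⟨lt_of_le_of_ne (not_lt.mp h) hb.ne', hb.symm⟩, Or.inr rfl⟩
  · intro q hq
    rw [Finset.mem_filter, mem_Pfin] at hq
    obtain ⟨⟨hlt, hadj⟩, hiz⟩ := hq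
    rcases hiz with h | h
    · rw [if_pos h, if_pos (h ▸ hlt)]
      exact Prod.ext h.symm rfl
    · have h1 : ¬(q.1 = iz i j hij) := fun hh => hadj.ne (hh.trans h.symm)
      rw [if_neg h1, if_neg (show ¬(iz i j hij < q.1) by rw [← h]; exact not_lt.mpr hlt.le)]
      exact Prod.ext rfl h.symm
  · intro b hb
    rw [mem_Nbr] at hb
    by_cases h : iz i j hij < b
    · rw [if_pos h]; simp
    · rw [if_neg h]; simp [hb.ne']
  · intro q hq
    rw [Finset.mem_filter, mem_Pfin] at hq
    obtain ⟨⟨hlt, hadj⟩, hiz⟩ := hq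
    rcases hiz with h | h
    · have h2 : q.2 ≠ iz i j hij := fun hh => hadj.ne (h.trans hh.symm)
      rw [if_pos h]
      show L (EP i j hij A q.1 q.2) (EP i j hij A q.2 q.1) = _
      rw [show EP i j hij A q.1 q.2 = if q.2 ∈ A then j else i from by rw [EP, if_pos h],
        show EP i j hij A q.2 q.1 = j.succAbove q.2 from by rw [EP, if_neg h2]]
      split_ifs <;> rfl
    · have h1 : q.1 ≠ iz i j hij := fun hh => hadj.ne (hh.trans h.symm)
      rw [if_neg h1]
      show L (EP i j hij A q.1 q.2) (EP i j hij A q.2 q.1) = _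
      rw [show EP i j hij A q.1 q.2 = j.succAbove q.1 from by rw [EP, if_neg h1],
        show EP i j hij A q.2 q.1 = if q.1 ∈ A then j else i from by rw [EP, if_pos h]]
      split_ifs with h3
      · exact hsymm.apply j (j.succAbove q.1)
      · exact hsymm.apply i (j.succAbove q.1)

lemma prod_NI_LA (σ : SimpleGraph (Fin n)) (A : Finset (Fin n)) :
    ∏ q ∈ (Pfin σ).filter (fun q => ¬(q.1 = iz i j hij ∨ q.2 = iz i j hij)),
        ((addRowCol L i j).submatrix j.succAbove j.succAbove) q.1 q.2
      = ∏ q ∈ (Pfin σ).filter (fun q => ¬(q.1 = iz i j hij ∨ q.2 = iz i j hij)),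
          LAmp i j hij L A q := by
  refine Finset.prod_congr rfl fun q hq => ?_
  rw [Finset.mem_filter] at hq
  push_neg at hq
  obtain ⟨-, h1, h2⟩ := hq
  rw [M_apply_nn i j hij L h1 h2]
  show _ = L (EP i j hij A q.1 q.2) (EP i j hij A q.2 q.1)
  rw [show EP i j hij A q.1 q.2 = j.succAbove q.1 from by rw [EP, if_neg h1],
    show EP i j hij A q.2 q.1 = j.succAbove q.2 from by rw [EP, if_neg h2]]

lemma amplitude_expand (hsymm : L.IsSymm) (σ : SimpleGraph (Fin n)) :
    amplitude σ ((addRowCol L i j).submatrix j.succAbove j.succAbove)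
      = ∑ A ∈ (Nbr i j hij σ).powerset, ∏ q ∈ Pfin σ, LAmp i j hij L A q := by
  have h0 : amplitude σ ((addRowCol L i j).submatrix j.succAbove j.succAbove)
      = ∏ q ∈ Pfin σ, ((addRowCol L i j).submatrix j.succAbove j.succAbove) q.1 q.2 := rfl
  rw [h0, ← Finset.prod_filter_mul_prod_filter_not (Pfin σ)
    (fun q => q.1 = iz i j hij ∨ q.2 = iz i j hij)]
  rw [prod_I_eq i j hij hsymm σ
    (fun b => L j (j.succAbove b) + L i (j.succAbove b))
    (fun b hb => by rw [M_apply_iz i j hij L hb]; exact add_comm _ _)]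
  rw [Finset.prod_add, Finset.sum_mul]
  refine Finset.sum_congr rfl fun A hA => ?_
  rw [Finset.mem_powerset] at hA
  rw [← Finset.prod_filter_mul_prod_filter_not (Pfin σ)
    (fun q => q.1 = iz i j hij ∨ q.2 = iz i j hij) (LAmp i j hij L A)]
  rw [← prod_NI_LA i j hij σ A, prod_I_LA i j hij σ hsymm A]
  congr 1
  rw [← Finset.prod_filter_mul_prod_filter_not (Nbr i j hij σ) (· ∈ A)]
  congr 1
  · rw [show (Nbr i j hij σ).filter (· ∈ A) = A from by
      rw [Finset.filter_mem_eq_inter]; exact Finset.inter_eq_right.mpr hA]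
    exact Finset.prod_congr rfl fun b hb => (if_pos hb).symm
  · rw [show (Nbr i j hij σ).filter (fun b => ¬ b ∈ A) = Nbr i j hij σ \ A from
      (Finset.sdiff_eq_filter _ _).symm]
    exact Finset.prod_congr rfl fun b hb => (if_neg (Finset.mem_sdiff.mp hb).2).symm


end AmpExp

include hij in
lemma deriv_lhs (L : Matrix (Fin (n + 1)) (Fin (n + 1)) ℝ) :
    deriv (fun t : ℝ => treeSum (L + t • tangentE i j)) 0
      = ∑ τ ∈ Finset.univ.filter
          (fun τ : SimpleGraph (Fin (n + 1)) => τ.IsTree ∧ τ.Adj i j),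
          ∏ p ∈ (Pfin τ).erase (i, j), L p.1 p.2 := by
  have key : ∀ τ : SimpleGraph (Fin (n + 1)),
      HasDerivAt (fun t : ℝ => amplitude τ (L + t • tangentE i j))
        (∑ p ∈ Pfin τ, (∏ p' ∈ (Pfin τ).erase p, L p'.1 p'.2) * tangentE i j p.1 p.2) 0 := by
    intro τ
    have h0 : ∀ p : Fin (n + 1) × Fin (n + 1),
        HasDerivAt (fun t : ℝ => (L + t • tangentE i j) p.1 p.2) (tangentE i j p.1 p.2) 0 := by
      intro p
      have heq : (fun t : ℝ => (L + t • tangentE i j) p.1 p.2)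
          = fun t => L p.1 p.2 + t * tangentE i j p.1 p.2 := by
        funext t
        simp [Matrix.add_apply, Matrix.smul_apply, smul_eq_mul]
      rw [heq]
      simpa using (hasDerivAt_mul_const (tangentE i j p.1 p.2)).const_add (L p.1 p.2)
    have h1 := HasDerivAt.fun_finsetProd (u := Pfin τ)
      (f := fun (p : Fin (n + 1) × Fin (n + 1)) (t : ℝ) => (L + t • tangentE i j) p.1 p.2)
      (f' := fun p => tangentE i j p.1 p.2) (fun p _ => h0 p)
    have h2 : (∑ p ∈ Pfin τ, (∏ p' ∈ (Pfin τ).erase p,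
          (L + (0:ℝ) • tangentE i j) p'.1 p'.2) • tangentE i j p.1 p.2)
        = ∑ p ∈ Pfin τ, (∏ p' ∈ (Pfin τ).erase p, L p'.1 p'.2) * tangentE i j p.1 p.2 := by
      simp [Matrix.add_apply, Matrix.smul_apply]
    rw [h2] at h1
    exact h1
  have hsum := HasDerivAt.fun_sum
    (u := Finset.univ.filter (fun τ : SimpleGraph (Fin (n + 1)) => τ.IsTree))
    (fun τ _ => key τ)
  have hsum' : HasDerivAt (fun t : ℝ => treeSum (L + t • tangentE i j))
      (∑ τ ∈ Finset.univ.filter (fun τ : SimpleGraph (Fin (n + 1)) => τ.IsTree),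
        ∑ p ∈ Pfin τ, (∏ p' ∈ (Pfin τ).erase p, L p'.1 p'.2) * tangentE i j p.1 p.2) 0 := hsum
  rw [hsum'.deriv]
  have hper : ∀ τ : SimpleGraph (Fin (n + 1)),
      (∑ p ∈ Pfin τ, (∏ p' ∈ (Pfin τ).erase p, L p'.1 p'.2) * tangentE i j p.1 p.2)
        = if τ.Adj i j then ∏ p ∈ (Pfin τ).erase (i, j), L p.1 p.2 else 0 := by
    intro τ
    rw [Finset.sum_congr rfl (fun p hp => by
      rw [tangentE_val i j hij (mem_Pfin.mp hp).1, mul_ite, mul_one, mul_zero])]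
    rw [Finset.sum_ite_eq' (Pfin τ) ((i, j) : Fin (n + 1) × Fin (n + 1))
      (fun p => ∏ p' ∈ (Pfin τ).erase p, L p'.1 p'.2)]
    have : (i, j) ∈ Pfin τ ↔ τ.Adj i j := by
      rw [mem_Pfin]
      exact ⟨fun h => h.2, fun h => ⟨hij, h⟩⟩
    rw [if_congr this rfl rfl]
  rw [Finset.sum_congr rfl fun τ _ => hper τ, ← Finset.sum_filter, Finset.filter_filter]


include hij in
lemma rhs_expand {L : Matrix (Fin (n + 1)) (Fin (n + 1)) ℝ} (hsymm : L.IsSymm) :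
    treeSum ((addRowCol L i j).submatrix j.succAbove j.succAbove)
      = ∑ x ∈ (Finset.univ.filter (fun σ : SimpleGraph (Fin n) => σ.IsTree)).sigma
          (fun σ => (Nbr i j hij σ).powerset),
          ∏ q ∈ Pfin x.1, LAmp i j hij L x.2 q := by
  rw [treeSum, Finset.sum_sigma]
  exact Finset.sum_congr rfl fun σ _ => amplitude_expand i j hij hsymm σ

end Setup


/-- for a Laplace-like `L` and `i < j`, the directional derivative of the
tree sum `T` along `v_{ij}` (i.e. `d/dt T(L + t E_{ij})` at `t = 0`) equals `T(L')`,
where `L' = M_{jj}(L₊)`. -/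
theorem treeSum_directional_derivative {n : ℕ}
    (L : Matrix (Fin (n + 1)) (Fin (n + 1)) ℝ)
    (hsymm : L.IsSymm) (hrow : ∀ i, ∑ j, L i j = 0)
    (i j : Fin (n + 1)) (hij : i < j) :
    deriv (fun t : ℝ => treeSum (L + t • tangentE i j)) 0 =
      treeSum ((addRowCol L i j).submatrix j.succAbove j.succAbove) := by
  rw [deriv_lhs i j hij L, rhs_expand i j hij hsymm]
  refine Finset.sum_bij'
    (fun τ _ => (⟨Psi i j hij τ, Aof i j hij τ⟩ :
        Σ _ : SimpleGraph (Fin n), Finset (Fin n)))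
    (fun x _ => Phi i j hij x.2 x.1) ?_ ?_ ?_ ?_ ?_
  · intro τ hτ
    rw [Finset.mem_filter] at hτ
    obtain ⟨-, hτtree, hτij⟩ := hτ
    rw [Finset.mem_sigma]
    exact ⟨Finset.mem_filter.mpr ⟨Finset.mem_univ _, Psi_isTree i j hij hτtree hτij⟩,
      Finset.mem_powerset.mpr (Aof_subset i j hij τ)⟩
  · intro x hx
    rw [Finset.mem_sigma, Finset.mem_filter, Finset.mem_powerset] at hx
    exact Finset.mem_filter.mpr ⟨Finset.mem_univ _,
      Phi_isTree i j hij hx.1.2, Phi_adj_ij i j hij x.2 x.1⟩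
  · intro τ hτ
    rw [Finset.mem_filter] at hτ
    exact Phi_Psi i j hij hτ.2.1.IsAcyclic hτ.2.2
  · intro x hx
    rw [Finset.mem_sigma, Finset.mem_filter, Finset.mem_powerset] at hx
    obtain ⟨σ, A⟩ := x
    have h1 := Psi_Phi i j hij hx.2
    have h2 := Aof_Phi i j hij hx.2
    dsimp only at h1 h2 ⊢
    rw [h1, h2]
  · intro τ hτ
    rw [Finset.mem_filter] at hτ
    have hW := weight_eq i j hij hsymm (Psi i j hij τ) (Aof i j hij τ)
    rw [Phi_Psi i j hij hτ.2.1.IsAcyclic hτ.2.2] at hW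
    exact hW.symm
end

section
/- For the complete graph K_n, the Matrix-Tree Theorem yields Cayley's formula: the number of spanning trees of K_n (equivalently, the number of trees on the labeled vertex set {1,…,n}) is n^{n−2}. -/
open scoped Classical
open SimpleGraph Finset Function

variable {n : ℕ}


/-- `p` is a parent function rooted at `r`. -/
def IsPF (p : Fin n → Fin n) (r : Fin n) : Prop :=
  p r = r ∧ ∀ v, ∃ k, p^[k] v = r

/-- The graph associated to a parent function. -/
def pfG (p : Fin n → Fin n) : SimpleGraph (Fin n) :=
  SimpleGraph.fromRel (fun v w => p v = w)

lemma pfG_adj {p : Fin n → Fin n} {v w : Fin n} :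
    (pfG p).Adj v w ↔ v ≠ w ∧ (p v = w ∨ p w = v) := by
  simp [pfG, SimpleGraph.fromRel_adj]

lemma iterate_fixed_root {p : Fin n → Fin n} {r : Fin n} (h : p r = r) (k : ℕ) :
    p^[k] r = r := Function.iterate_fixed h k

lemma no_return {p : Fin n → Fin n} {r : Fin n} (hp : IsPF p r) {v : Fin n} {k : ℕ}
    (hk : 0 < k) (h : p^[k] v = v) : v = r := by
  obtain ⟨N, hN⟩ := hp.2 v
  have h1 : ∀ m : ℕ, p^[m * k] v = v := by
    intro m
    induction m with
    | zero => simp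
    | succ m ih =>
      have : (m + 1) * k = k + m * k := by ring
      rw [this, Function.iterate_add_apply, ih, h]
  have h2 : p^[N * k] v = r := by
    have hle : N ≤ N * k := Nat.le_mul_of_pos_right N hk
    obtain ⟨d, hd⟩ := Nat.exists_eq_add_of_le hle
    rw [hd, Nat.add_comm, Function.iterate_add_apply, hN,
      iterate_fixed_root hp.1]
  rw [h1 N] at h2
  exact h2

lemma pf_ne_self {p : Fin n → Fin n} {r : Fin n} (hp : IsPF p r) {v : Fin n}
    (hv : v ≠ r) : p v ≠ v := fun h => hv (no_return hp Nat.one_pos (by simpa using h))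

lemma pfG_adj_parent {p : Fin n → Fin n} {r : Fin n} (hp : IsPF p r) {v : Fin n}
    (hv : v ≠ r) : (pfG p).Adj v (p v) :=
  pfG_adj.2 ⟨fun h => pf_ne_self hp hv h.symm, Or.inl rfl⟩

lemma pfG_reachable {p : Fin n → Fin n} {r : Fin n} (hp : IsPF p r) :
    ∀ (k : ℕ) (v : Fin n), p^[k] v = r → (pfG p).Reachable v r := by
  intro k
  induction k with
  | zero => intro v hv; simp only [Function.iterate_zero, id_eq] at hv; exact hv ▸ Reachable.refl v
  | succ k ih =>
    intro v hv
    by_cases h : v = r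
    · subst h; rfl
    · have : p^[k] (p v) = r := by rwa [← Function.iterate_succ_apply]
      exact ((pfG_adj_parent hp h).reachable).trans (ih _ this)

lemma pfG_connected {p : Fin n → Fin n} {r : Fin n} (hp : IsPF p r) :
    (pfG p).Connected := by
  have : Nonempty (Fin n) := ⟨r⟩
  refine ⟨fun v w => ?_⟩
  obtain ⟨k, hk⟩ := hp.2 v
  obtain ⟨m, hm⟩ := hp.2 w
  exact (pfG_reachable hp k v hk).trans (pfG_reachable hp m w hm).symm

lemma pfG_isBridge {p : Fin n → Fin n} {r : Fin n} (hp : IsPF p r) {v : Fin n}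
    (hv : v ≠ r) : (pfG p).IsBridge s(v, p v) := by
  rw [isBridge_iff]
  rintro ⟨w⟩
  -- invariant: every vertex reachable from `v` in the deleted graph has `v` in its iterate orbit
  have key : ∀ {x y : Fin n} (_ : ((pfG p) \ fromEdgeSet {s(v, p v)}).Walk x y),
      (∃ k, p^[k] x = v) → ∃ k, p^[k] y = v := by
    intro x y w
    induction w with
    | nil => exact id
    | @cons x x' y h w ih =>
      intro hx
      apply ih
      have hadj : (pfG p).Adj x x' := h.1
      have hne : s(x, x') ≠ s(v, p v) := by
        intro he
        exact h.2 (by simp [SimpleGraph.fromEdgeSet_adj, he, hadj.ne])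
      obtain ⟨hxx', hor⟩ := pfG_adj.1 hadj
      rcases hor with hpx | hpx'
      · -- x' = p x
        have hxv : x ≠ v := by
          rintro rfl
          exact hne (by rw [hpx])
        obtain ⟨k, hk⟩ := hx
        rcases Nat.eq_zero_or_pos k with rfl | hk0
        · exact absurd hk hxv
        · obtain ⟨k', rfl⟩ := Nat.exists_eq_succ_of_ne_zero hk0.ne'
          exact ⟨k', by rw [← hpx, ← Function.iterate_succ_apply]; exact hk⟩
      · obtain ⟨k, hk⟩ := hx
        exact ⟨k + 1, by rw [Function.iterate_succ_apply, hpx']; exact hk⟩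
  obtain ⟨k, hk⟩ := key w ⟨0, rfl⟩
  exact hv (no_return hp (Nat.succ_pos k) (by rw [Function.iterate_succ_apply, hk]))

lemma pfG_isTree {p : Fin n → Fin n} {r : Fin n} (hp : IsPF p r) :
    (pfG p).IsTree := by
  refine ⟨pfG_connected hp, isAcyclic_iff_forall_adj_isBridge.2 ?_⟩
  intro a b hab
  obtain ⟨hne, hor⟩ := pfG_adj.1 hab
  rcases hor with h | h
  · have ha : a ≠ r := by rintro rfl; rw [hp.1] at h; exact hne h
    rw [← h]
    exact pfG_isBridge hp ha
  · have hb : b ≠ r := by rintro rfl; rw [hp.1] at h; exact hne h.symm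
    rw [← h, Sym2.eq_swap]
    exact pfG_isBridge hp hb

variable {τ : SimpleGraph (Fin n)}

/-- The unique path from `v` to `r` in a tree. -/
noncomputable def upath (hτ : τ.IsTree) (v r : Fin n) : τ.Walk v r :=
  (hτ.existsUnique_path v r).choose

lemma upath_isPath (hτ : τ.IsTree) (v r : Fin n) : (upath hτ v r).IsPath :=
  (hτ.existsUnique_path v r).choose_spec.1

lemma upath_unique (hτ : τ.IsTree) {v r : Fin n} {w : τ.Walk v r} (hw : w.IsPath) :
    w = upath hτ v r :=
  (hτ.existsUnique_path v r).choose_spec.2 w hw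

/-- The parent function of a tree with respect to root `r`. -/
noncomputable def treePA (hτ : τ.IsTree) (r : Fin n) : Fin n → Fin n :=
  fun v => (upath hτ v r).getVert 1

lemma upath_self (hτ : τ.IsTree) (r : Fin n) : upath hτ r r = Walk.nil :=
  (upath_unique hτ Walk.IsPath.nil).symm

lemma treePA_root (hτ : τ.IsTree) (r : Fin n) : treePA hτ r r = r := by
  show (upath hτ r r).getVert 1 = r
  rw [upath_self]
  rfl

lemma upath_step (hτ : τ.IsTree) {v r : Fin n} (hv : v ≠ r) :
    upath hτ (treePA hτ r v) r = (upath hτ v r).tail := by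
  exact (upath_unique hτ ((upath_isPath hτ v r).tail)).symm

lemma upath_length_step (hτ : τ.IsTree) {v r : Fin n} (hv : v ≠ r) :
    (upath hτ (treePA hτ r v) r).length + 1 = (upath hτ v r).length := by
  rw [upath_step hτ hv]
  exact Walk.length_tail_add_one (Walk.not_nil_of_ne hv)

lemma treePA_reaches (hτ : τ.IsTree) (r : Fin n) (v : Fin n) :
    ∃ k, (treePA hτ r)^[k] v = r := by
  generalize hm : (upath hτ v r).length = m
  induction m using Nat.strong_induction_on generalizing v with
  | _ m ih =>
    by_cases hv : v = r
    · exact ⟨0, hv⟩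
    · have hlt : (upath hτ (treePA hτ r v) r).length < m := by
        have := upath_length_step hτ (r := r) hv
        omega
      obtain ⟨k, hk⟩ := ih _ hlt (treePA hτ r v) rfl
      exact ⟨k + 1, by rwa [Function.iterate_succ_apply]⟩

lemma treePA_isPF (hτ : τ.IsTree) (r : Fin n) : IsPF (treePA hτ r) r :=
  ⟨treePA_root hτ r, treePA_reaches hτ r⟩

lemma treePA_adj (hτ : τ.IsTree) {r v : Fin n} (hv : v ≠ r) :
    τ.Adj v (treePA hτ r v) := by
  have hlen : 0 < (upath hτ v r).length := by
    rw [← Walk.not_nil_iff_lt_length]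
    exact Walk.not_nil_of_ne hv
  have := (upath hτ v r).adj_getVert_succ hlen
  rwa [Walk.getVert_zero] at this

lemma pfG_treePA (hτ : τ.IsTree) (r : Fin n) : pfG (treePA hτ r) = τ := by
  ext v w
  rw [pfG_adj]
  constructor
  · rintro ⟨hne, h | h⟩
    · have hv : v ≠ r := by
        intro hvr; apply hne; rw [hvr] at h ⊢; rw [treePA_root] at h; exact h
      rw [← h]; exact treePA_adj hτ hv
    · have hw : w ≠ r := by
        intro hwr; apply hne; rw [hwr] at h; rw [treePA_root] at h
        exact h.symm.trans hwr.symm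
      rw [← h]; exact (treePA_adj hτ hw).symm
  · intro h
    refine ⟨h.ne, ?_⟩
    by_cases hw : w ∈ (upath hτ v r).support
    · left
      have hdrop : upath hτ w r = (upath hτ v r).dropUntil w hw :=
        (upath_unique hτ ((upath_isPath hτ v r).dropUntil hw)).symm
      have hvnot : v ∉ (upath hτ w r).support := by
        rw [hdrop]
        intro hvin
        have hnodup : ((upath hτ v r).support).Nodup := (upath_isPath hτ v r).2
        rw [← (upath hτ v r).take_spec hw, Walk.support_append, List.nodup_append] at hnodup
        rw [Walk.support_eq_cons] at hvin
        rcases List.mem_cons.1 hvin with h1 | h1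
        · exact h.ne h1
        · exact hnodup.2.2 _ ((upath hτ v r).takeUntil w hw).start_mem_support _ h1 rfl
      have hcons : Walk.cons h (upath hτ w r) = upath hτ v r :=
        upath_unique hτ ((Walk.cons_isPath_iff h _).2 ⟨upath_isPath hτ w r, hvnot⟩)
      show (upath hτ v r).getVert 1 = w
      rw [← hcons, Walk.getVert_cons_succ, Walk.getVert_zero]
    · right
      have hcons : Walk.cons h.symm (upath hτ v r) = upath hτ w r :=
        upath_unique hτ ((Walk.cons_isPath_iff h.symm _).2 ⟨upath_isPath hτ v r, hw⟩)
      show (upath hτ w r).getVert 1 = v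
      rw [← hcons, Walk.getVert_cons_succ, Walk.getVert_zero]

lemma pf_walk {p : Fin n → Fin n} {r : Fin n} (hp : IsPF p r) :
    ∀ (k : ℕ) (v : Fin n), p^[k] v = r →
      ∃ w : (pfG p).Walk v r, w.IsPath ∧ (v ≠ r → w.getVert 1 = p v) ∧
        ∀ u ∈ w.support, ∃ j, p^[j] v = u := by
  intro k
  induction k with
  | zero =>
    intro v hv
    simp only [Function.iterate_zero, id_eq] at hv
    subst hv
    exact ⟨Walk.nil, Walk.IsPath.nil, fun h => absurd rfl h,
      fun u hu => ⟨0, by simp at hu; simp [hu]⟩⟩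
  | succ k ih =>
    intro v hv
    by_cases hvr : v = r
    · subst hvr
      exact ⟨Walk.nil, Walk.IsPath.nil, fun h => absurd rfl h,
        fun u hu => ⟨0, by simp at hu; simp [hu]⟩⟩
    · have hpv : p^[k] (p v) = r := by rwa [← Function.iterate_succ_apply]
      obtain ⟨w', hw'path, _, hw'supp⟩ := ih (p v) hpv
      have hvnot : v ∉ w'.support := by
        intro hvin
        obtain ⟨j, hj⟩ := hw'supp v hvin
        exact hvr (no_return hp (Nat.succ_pos j) (by rwa [Function.iterate_succ_apply]))
      refine ⟨Walk.cons (pfG_adj_parent hp hvr) w',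
        (Walk.cons_isPath_iff _ _).2 ⟨hw'path, hvnot⟩, fun _ => ?_, ?_⟩
      · rw [Walk.getVert_cons_succ, Walk.getVert_zero]
      · intro u hu
        rw [Walk.support_cons] at hu
        rcases List.mem_cons.1 hu with h1 | h1
        · exact ⟨0, h1.symm⟩
        · obtain ⟨j, hj⟩ := hw'supp u h1
          exact ⟨j + 1, by rwa [Function.iterate_succ_apply]⟩

lemma treePA_pfG {p : Fin n → Fin n} {r : Fin n} (hp : IsPF p r) :
    treePA (pfG_isTree hp) r = p := by
  funext v
  by_cases hvr : v = r
  · subst hvr; rw [treePA_root, hp.1]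
  · obtain ⟨k, hk⟩ := hp.2 v
    obtain ⟨w, hwpath, hwvert, _⟩ := pf_walk hp k v hk
    have : w = upath (pfG_isTree hp) v r := upath_unique _ hwpath
    show (upath (pfG_isTree hp) v r).getVert 1 = p v
    rw [← this]
    exact hwvert hvr

/-- Lemma A: the number of trees equals the number of parent functions rooted at `r`. -/
lemma card_trees_eq_card_pf (r : Fin n) :
    (Finset.univ.filter (fun τ : SimpleGraph (Fin n) => τ.IsTree)).card =
      (Finset.univ.filter (fun p : Fin n → Fin n => IsPF p r)).card := by
  refine Finset.card_bij' (fun τ hτ => treePA (Finset.mem_filter.1 hτ).2 r)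
    (fun p hp => pfG p) ?_ ?_ ?_ ?_
  · intro τ hτ
    simp only [Finset.mem_filter, Finset.mem_univ, true_and]
    exact treePA_isPF _ r
  · intro p hp
    simp only [Finset.mem_filter, Finset.mem_univ, true_and]
    exact pfG_isTree (Finset.mem_filter.1 hp).2
  · intro τ hτ
    exact pfG_treePA _ r
  · intro p hp
    exact treePA_pfG (Finset.mem_filter.1 hp).2

/-! ### Joyal's bijection: cyclic part machinery -/

/-- The set of cyclic (periodic) points of `f`. -/
noncomputable def cyc (f : Fin n → Fin n) : Finset (Fin n) :=
  Finset.univ.filter (fun v => ∃ k, 0 < k ∧ f^[k] v = v)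

lemma mem_cyc {f : Fin n → Fin n} {v : Fin n} :
    v ∈ cyc f ↔ ∃ k, 0 < k ∧ f^[k] v = v := by simp [cyc]

lemma cyc_maps {f : Fin n → Fin n} {v : Fin n} (hv : v ∈ cyc f) : f v ∈ cyc f := by
  obtain ⟨k, hk, hkv⟩ := mem_cyc.1 hv
  exact mem_cyc.2 ⟨k, hk, by
    rw [← Function.iterate_succ_apply, Function.iterate_succ_apply', hkv]⟩

lemma cyc_maps_iter {f : Fin n → Fin n} {v : Fin n} (hv : v ∈ cyc f) (m : ℕ) :
    f^[m] v ∈ cyc f := by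
  induction m with
  | zero => exact hv
  | succ m ih => rw [Function.iterate_succ_apply']; exact cyc_maps ih

lemma cyc_surj {f : Fin n → Fin n} {v : Fin n} (hv : v ∈ cyc f) :
    ∃ u ∈ cyc f, f u = v := by
  obtain ⟨k, hk, hkv⟩ := mem_cyc.1 hv
  refine ⟨f^[k-1] v, cyc_maps_iter hv _, ?_⟩
  rw [show f (f^[k-1] v) = f^[k-1+1] v from (Function.iterate_succ_apply' f (k-1) v).symm,
    Nat.sub_add_cancel hk]
  exact hkv

lemma exists_iter_mem_cyc (f : Fin n → Fin n) (v : Fin n) :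
    ∃ m, f^[m] v ∈ cyc f := by
  have : ¬ Function.Injective (fun i : Fin (n+1) => f^[i.1] v) := by
    intro hinj
    have := Fintype.card_le_of_injective _ hinj
    simp at this
  rw [Function.not_injective_iff] at this
  obtain ⟨i, j, hij, hne⟩ := this
  rcases Nat.lt_or_ge i.1 j.1 with h | h
  · refine ⟨i.1, mem_cyc.2 ⟨j.1 - i.1, by omega, ?_⟩⟩
    rw [← Function.iterate_add_apply]
    rw [Nat.sub_add_cancel h.le]
    exact hij.symm
  · have h' : j.1 < i.1 := by
      rcases Nat.lt_or_ge j.1 i.1 with h' | h'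
      · exact h'
      · exact absurd (Fin.ext (le_antisymm h h')).symm hne
    refine ⟨j.1, mem_cyc.2 ⟨i.1 - j.1, by omega, ?_⟩⟩
    rw [← Function.iterate_add_apply, Nat.sub_add_cancel h'.le]
    exact hij

lemma period_iter {f : Fin n → Fin n} {v : Fin n} {c : ℕ} (h : f^[c] v = v) (m : ℕ) :
    f^[m * c] v = v := by
  induction m with
  | zero => simp
  | succ m ih =>
    have : (m + 1) * c = c + m * c := by ring
    rw [this, Function.iterate_add_apply, ih, h]

/-- `f` restricted to its cyclic set, as an equivalence. -/
noncomputable def cycEquiv (f : Fin n → Fin n) :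
    Fin (cyc f).card ≃ {x // x ∈ cyc f} :=
  ((cyc f).orderIsoOfFin rfl).toEquiv.trans
    (Equiv.ofBijective (fun x => ⟨f x.1, cyc_maps x.2⟩)
      (Finite.surjective_iff_bijective.1 (by
        rintro ⟨v, hv⟩
        obtain ⟨u, hu, huv⟩ := cyc_surj hv
        exact ⟨⟨u, hu⟩, Subtype.ext huv⟩)))

/-- The spine of `f`: the cyclic values in the order induced by sorting the cyclic set. -/
noncomputable def spine (f : Fin n → Fin n) (i : Fin (cyc f).card) : Fin n :=
  (cycEquiv f i).1

lemma spine_mem (f : Fin n → Fin n) (i : Fin (cyc f).card) : spine f i ∈ cyc f :=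
  (cycEquiv f i).2

lemma spine_inj {f : Fin n → Fin n} : Function.Injective (spine f) := by
  intro i j h
  exact (cycEquiv f).injective (Subtype.ext h)

lemma spine_surj {f : Fin n → Fin n} {v : Fin n} (hv : v ∈ cyc f) :
    ∃ i, spine f i = v := by
  obtain ⟨i, hi⟩ := (cycEquiv f).surjective ⟨v, hv⟩
  exact ⟨i, congrArg Subtype.val hi⟩

/-- successor within `Fin m`, stopping at the top. -/
def nxt {m : ℕ} (i : Fin m) : Fin m := if h : i.1 + 1 < m then ⟨i.1 + 1, h⟩ else i

/-- The Joyal parent function associated to `f`. -/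
noncomputable def joyalP (f : Fin n → Fin n) : Fin n → Fin n := fun v =>
  if h : v ∈ cyc f then spine f (nxt ((cycEquiv f).symm ⟨v, h⟩)) else f v

lemma joyalP_not_mem {f : Fin n → Fin n} {v : Fin n} (hv : v ∉ cyc f) :
    joyalP f v = f v := dif_neg hv

lemma joyalP_spine {f : Fin n → Fin n} (i : Fin (cyc f).card) :
    joyalP f (spine f i) = spine f (nxt i) := by
  have h : spine f i ∈ cyc f := spine_mem f i
  have : (⟨spine f i, h⟩ : {x // x ∈ cyc f}) = cycEquiv f i := Subtype.ext rfl
  rw [joyalP, dif_pos h, this, Equiv.symm_apply_apply]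

lemma cyc_card_pos (hn : 0 < n) (f : Fin n → Fin n) : 0 < (cyc f).card := by
  obtain ⟨m, hm⟩ := exists_iter_mem_cyc f ⟨0, hn⟩
  exact Finset.card_pos.2 ⟨_, hm⟩

lemma nxt_of_lt {m : ℕ} {i : Fin m} (h : i.1 + 1 < m) : nxt i = ⟨i.1 + 1, h⟩ :=
  dif_pos h

lemma nxt_last {m : ℕ} {i : Fin m} (h : i.1 = m - 1) : nxt i = i := by
  have : ¬ (i.1 + 1 < m) := by have := i.2; omega
  exact dif_neg this

/-- climbing the spine reaches the top. -/
lemma joyalP_iter_spine (f : Fin n → Fin n) :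
    ∀ (m : ℕ) (i : Fin (cyc f).card) (_ : i.1 + m = (cyc f).card - 1)
      (h : (cyc f).card - 1 < (cyc f).card),
      (joyalP f)^[m] (spine f i) = spine f ⟨(cyc f).card - 1, h⟩ := by
  intro m
  induction m with
  | zero =>
    intro i hi h
    simp only [Function.iterate_zero, id_eq]
    have hieq : i = ⟨(cyc f).card - 1, h⟩ := Fin.ext (show i.1 = (cyc f).card - 1 by omega)
    rw [hieq]
  | succ m ih =>
    intro i hi h
    rw [Function.iterate_succ_apply, joyalP_spine]
    have hlt : i.1 + 1 < (cyc f).card := by omega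
    rw [nxt_of_lt hlt]
    exact ih ⟨i.1 + 1, hlt⟩ (by show i.1 + 1 + m = (cyc f).card - 1; omega) h

/-- Joyal's map: a function gives a doubly rooted tree `(a, b, p)`. -/
noncomputable def joyal (hn : 0 < n) (f : Fin n → Fin n) :
    Fin n × Fin n × (Fin n → Fin n) :=
  (spine f ⟨0, cyc_card_pos hn f⟩,
   spine f ⟨(cyc f).card - 1, by have := cyc_card_pos hn f; omega⟩,
   joyalP f)

lemma joyalP_isPF (hn : 0 < n) (f : Fin n → Fin n)
    (h : (cyc f).card - 1 < (cyc f).card) :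
    IsPF (joyalP f) (spine f ⟨(cyc f).card - 1, h⟩) := by
  constructor
  · rw [joyalP_spine, nxt_last rfl]
  · -- every vertex eventually reaches the top of the spine
    have spine_reach : ∀ i : Fin (cyc f).card,
        ∃ j, (joyalP f)^[j] (spine f i) = spine f ⟨(cyc f).card - 1, h⟩ := by
      intro i
      refine ⟨(cyc f).card - 1 - i.1, joyalP_iter_spine f _ i ?_ h⟩
      have := i.2; omega
    have aux : ∀ (m : ℕ) (v : Fin n), f^[m] v ∈ cyc f →
        ∃ j, (joyalP f)^[j] v = spine f ⟨(cyc f).card - 1, h⟩ := by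
      intro m
      induction m with
      | zero =>
        intro v hv
        simp only [Function.iterate_zero, id_eq] at hv
        obtain ⟨i, hi⟩ := spine_surj hv
        exact hi ▸ spine_reach i
      | succ m ih =>
        intro v hv
        by_cases hvc : v ∈ cyc f
        · obtain ⟨i, hi⟩ := spine_surj hvc
          exact hi ▸ spine_reach i
        · rw [Function.iterate_succ_apply] at hv
          obtain ⟨j, hj⟩ := ih (f v) hv
          refine ⟨j + 1, ?_⟩
          rw [Function.iterate_succ_apply, joyalP_not_mem hvc]
          exact hj
    intro v
    obtain ⟨m, hm⟩ := exists_iter_mem_cyc f v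
    exact aux m v hm

/-! ### The inverse of Joyal's map -/

/-- minimal number of steps from `a` to the root `b`. -/
noncomputable def spmax (a : Fin n) {b : Fin n} {p : Fin n → Fin n} (hp : IsPF p b) : ℕ :=
  Nat.find (hp.2 a)

lemma spmax_spec (a : Fin n) {b : Fin n} {p : Fin n → Fin n} (hp : IsPF p b) :
    p^[spmax a hp] a = b := Nat.find_spec (hp.2 a)

lemma spmax_min (a : Fin n) {b : Fin n} {p : Fin n → Fin n} (hp : IsPF p b) {j : ℕ}
    (hj : j < spmax a hp) : p^[j] a ≠ b := Nat.find_min (hp.2 a) hj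

/-- the spine of the doubly rooted tree `(a, b, p)`, as a finset. -/
noncomputable def tS (a : Fin n) {b : Fin n} {p : Fin n → Fin n} (hp : IsPF p b) :
    Finset (Fin n) :=
  (Finset.range (spmax a hp + 1)).image (fun j => p^[j] a)

lemma t_mem (a : Fin n) {b : Fin n} {p : Fin n → Fin n} (hp : IsPF p b) {j : ℕ}
    (hj : j ≤ spmax a hp) : p^[j] a ∈ tS a hp :=
  Finset.mem_image.2 ⟨j, Finset.mem_range.2 (by omega), rfl⟩

lemma mem_tS {a : Fin n} {b : Fin n} {p : Fin n → Fin n} {hp : IsPF p b} {v : Fin n} :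
    v ∈ tS a hp ↔ ∃ j ≤ spmax a hp, p^[j] a = v := by
  simp [tS, Finset.mem_image, Nat.lt_succ_iff]

lemma t_inj (a : Fin n) {b : Fin n} {p : Fin n → Fin n} (hp : IsPF p b) :
    ∀ i ≤ spmax a hp, ∀ j ≤ spmax a hp, p^[i] a = p^[j] a → i = j := by
  have key : ∀ i j, i < j → j ≤ spmax a hp → p^[i] a ≠ p^[j] a := by
    intro i j hij hj h
    have hper : p^[j - i] (p^[i] a) = p^[i] a := by
      rw [← Function.iterate_add_apply, Nat.sub_add_cancel hij.le]
      exact h.symm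
    have := no_return hp (k := j - i) (by omega) hper
    exact spmax_min a hp (by omega : i < spmax a hp) this
  intro i hi j hj h
  rcases Nat.lt_trichotomy i j with hlt | heq | hgt
  · exact absurd h (key i j hlt hj)
  · exact heq
  · exact absurd h.symm (key j i hgt hi)

lemma tS_card (a : Fin n) {b : Fin n} {p : Fin n → Fin n} (hp : IsPF p b) :
    (tS a hp).card = spmax a hp + 1 := by
  rw [tS, Finset.card_image_of_injOn, Finset.card_range]
  intro i hi j hj h
  simp only [Finset.coe_range, Set.mem_Iio] at hi hj
  exact t_inj a hp i (by omega) j (by omega) h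

/-- The inverse of Joyal's map. -/
noncomputable def unjoyalF (a : Fin n) {b : Fin n} {p : Fin n → Fin n} (hp : IsPF p b) :
    Fin n → Fin n := fun v =>
  if h : v ∈ tS a hp then
    p^[((((tS a hp).orderIsoOfFin (tS_card a hp)).symm ⟨v, h⟩ :
        Fin (spmax a hp + 1)) : Fin (spmax a hp + 1)).1] a
  else p v

lemma unjoyalF_not_mem {a : Fin n} {b : Fin n} {p : Fin n → Fin n} {hp : IsPF p b}
    {v : Fin n} (hv : v ∉ tS a hp) : unjoyalF a hp v = p v := dif_neg hv

lemma unjoyalF_apply {a : Fin n} {b : Fin n} {p : Fin n → Fin n} {hp : IsPF p b}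
    (i : Fin (spmax a hp + 1)) :
    unjoyalF a hp (((tS a hp).orderIsoOfFin (tS_card a hp)) i : Fin n) = p^[i.1] a := by
  have h : ((tS a hp).orderIsoOfFin (tS_card a hp) i : Fin n) ∈ tS a hp :=
    ((tS a hp).orderIsoOfFin (tS_card a hp) i).2
  rw [unjoyalF, dif_pos h]
  congr 2
  have : (⟨_, h⟩ : {x // x ∈ tS a hp}) = (tS a hp).orderIsoOfFin (tS_card a hp) i :=
    Subtype.ext rfl
  rw [this, OrderIso.symm_apply_apply]

/-- transport of `orderIsoOfFin` along an equality of finsets (symm version). -/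
lemma orderIso_symm_val_eq {S T : Finset (Fin n)} (hST : S = T) {k₁ k₂ : ℕ}
    (h1 : S.card = k₁) (h2 : T.card = k₂) {v : Fin n} (hvS : v ∈ S) (hvT : v ∈ T) :
    (((S.orderIsoOfFin h1).symm ⟨v, hvS⟩ : Fin k₁)).1 =
      (((T.orderIsoOfFin h2).symm ⟨v, hvT⟩ : Fin k₂)).1 := by
  subst hST
  have hk : k₁ = k₂ := h1.symm.trans h2
  subst hk
  rfl

/-- transport of `orderIsoOfFin` along an equality of finsets (apply version). -/
lemma orderIso_apply_eq {S T : Finset (Fin n)} (hST : S = T) {k₁ k₂ : ℕ}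
    (h1 : S.card = k₁) (h2 : T.card = k₂) (i : Fin k₁) (j : Fin k₂) (hij : i.1 = j.1) :
    (S.orderIsoOfFin h1 i : Fin n) = (T.orderIsoOfFin h2 j : Fin n) := by
  subst hST
  have hk : k₁ = k₂ := h1.symm.trans h2
  subst hk
  cases Fin.ext hij
  rfl

@[simp] lemma joyal_snd_fst (hn : 0 < n) (f : Fin n → Fin n) :
    (joyal hn f).2.1 = spine f ⟨(cyc f).card - 1, by have := cyc_card_pos hn f; omega⟩ := rfl

lemma spine_def (f : Fin n → Fin n) (i : Fin (cyc f).card) :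
    spine f i = f ((cyc f).orderIsoOfFin rfl i : Fin n) := rfl

lemma f_eq_spine {f : Fin n → Fin n} {v : Fin n} (hv : v ∈ cyc f) :
    f v = spine f (((cyc f).orderIsoOfFin rfl).symm ⟨v, hv⟩) := by
  rw [spine_def, OrderIso.apply_symm_apply]

lemma joyalP_iter_from_start (hn : 0 < n) (f : Fin n → Fin n) :
    ∀ (j : ℕ) (hj : j < (cyc f).card),
      ((joyal hn f).2.2)^[j] ((joyal hn f).1) = spine f ⟨j, hj⟩ := by
  intro j
  induction j with
  | zero => intro hj; rfl
  | succ j ih =>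
    intro hj
    show (joyalP f)^[j+1] ((joyal hn f).1) = _
    rw [Function.iterate_succ_apply']
    have : (joyalP f)^[j] ((joyal hn f).1) = spine f ⟨j, by omega⟩ := ih (by omega)
    rw [this, joyalP_spine,
      nxt_of_lt (show (⟨j, by omega⟩ : Fin (cyc f).card).1 + 1 < (cyc f).card from hj)]

lemma unjoyal_joyal (hn : 0 < n) (f : Fin n → Fin n)
    (hp : IsPF (joyal hn f).2.2 (joyal hn f).2.1) :
    unjoyalF (joyal hn f).1 hp = f := by
  have hk : 0 < (cyc f).card := cyc_card_pos hn f
  have iter := joyalP_iter_from_start hn f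
  -- the number of steps from a to b
  have hm : spmax (joyal hn f).1 hp = (cyc f).card - 1 := by
    have hle : spmax (joyal hn f).1 hp ≤ (cyc f).card - 1 := by
      apply Nat.find_le
      rw [iter _ (by omega)]
      rfl
    rcases Nat.lt_or_ge (spmax (joyal hn f).1 hp) ((cyc f).card - 1) with hlt | hge
    · exfalso
      have hspec := spmax_spec (joyal hn f).1 hp
      rw [iter _ (by omega : spmax (joyal hn f).1 hp < (cyc f).card)] at hspec
      have h2 := congrArg Fin.val (spine_inj (hspec.trans (joyal_snd_fst hn f)))
      simp only [Fin.val_mk] at h2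
      omega
    · omega
  have hS : tS (joyal hn f).1 hp = cyc f := by
    ext v
    rw [mem_tS]
    constructor
    · rintro ⟨j, hj, hjv⟩
      rw [hm] at hj
      rw [iter j (by omega)] at hjv
      exact hjv ▸ spine_mem f _
    · intro hv
      obtain ⟨i, hi⟩ := spine_surj hv
      refine ⟨i.1, by rw [hm]; have := i.2; omega, ?_⟩
      rw [iter i.1 i.2]
      rwa [Fin.eta]
  funext v
  by_cases hv : v ∈ tS (joyal hn f).1 hp
  · have hvc : v ∈ cyc f := hS ▸ hv
    rw [unjoyalF, dif_pos hv]
    have hi₀ : ((((tS (joyal hn f).1 hp).orderIsoOfFin (tS_card _ hp)).symm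
        ⟨v, hv⟩)).1 < (cyc f).card := by
      have h2 := ((((tS (joyal hn f).1 hp).orderIsoOfFin (tS_card _ hp)).symm ⟨v, hv⟩)).2
      omega
    rw [iter _ hi₀, f_eq_spine hvc]
    congr 1
    apply Fin.ext
    simp only [Fin.val_mk]
    exact orderIso_symm_val_eq hS (tS_card _ hp) rfl hv hvc
  · rw [unjoyalF_not_mem hv]
    exact joyalP_not_mem (fun hc => hv (hS ▸ hc))

lemma two_iter_eq (g : Fin n → Fin n) (v : Fin n) :
    ∃ i j, i < j ∧ g^[i] v = g^[j] v := by
  have : ¬ Function.Injective (fun i : Fin (n+1) => g^[i.1] v) := by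
    intro hinj
    have := Fintype.card_le_of_injective _ hinj
    simp at this
  rw [Function.not_injective_iff] at this
  obtain ⟨i, j, hij, hne⟩ := this
  rcases Nat.lt_or_ge i.1 j.1 with h | h
  · exact ⟨i.1, j.1, h, hij⟩
  · have h' : j.1 < i.1 := by
      rcases Nat.lt_or_ge j.1 i.1 with h' | h'
      · exact h'
      · exact absurd (Fin.ext (le_antisymm h h')).symm hne
    exact ⟨j.1, i.1, h', hij.symm⟩

section RT2

variable {a b : Fin n} {p : Fin n → Fin n} (hp : IsPF p b)

lemma unjoyalF_mem_char {v : Fin n} (hv : v ∈ tS a hp) :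
    unjoyalF a hp v =
      p^[((((tS a hp).orderIsoOfFin (tS_card a hp)).symm ⟨v, hv⟩)).1] a := dif_pos hv

lemma unjoyalF_maps_S {v : Fin n} (hv : v ∈ tS a hp) : unjoyalF a hp v ∈ tS a hp := by
  rw [unjoyalF_mem_char hp hv]
  refine t_mem a hp ?_
  have := ((((tS a hp).orderIsoOfFin (tS_card a hp)).symm ⟨v, hv⟩)).2
  omega

lemma unjoyalF_injOn_S {v w : Fin n} (hv : v ∈ tS a hp) (hw : w ∈ tS a hp)
    (h : unjoyalF a hp v = unjoyalF a hp w) : v = w := by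
  rw [unjoyalF_mem_char hp hv, unjoyalF_mem_char hp hw] at h
  have hiv := ((((tS a hp).orderIsoOfFin (tS_card a hp)).symm ⟨v, hv⟩)).2
  have hiw := ((((tS a hp).orderIsoOfFin (tS_card a hp)).symm ⟨w, hw⟩)).2
  have heq := t_inj a hp _ (by omega) _ (by omega) h
  have : (((tS a hp).orderIsoOfFin (tS_card a hp)).symm ⟨v, hv⟩) =
      (((tS a hp).orderIsoOfFin (tS_card a hp)).symm ⟨w, hw⟩) := Fin.ext heq
  have := congrArg (fun i => (((tS a hp).orderIsoOfFin (tS_card a hp)) i : Fin n)) this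
  simpa [OrderIso.apply_symm_apply] using this

lemma unjoyalF_iter_mem {v : Fin n} (hv : v ∈ tS a hp) (c : ℕ) :
    (unjoyalF a hp)^[c] v ∈ tS a hp := by
  induction c with
  | zero => exact hv
  | succ c ih => rw [Function.iterate_succ_apply']; exact unjoyalF_maps_S hp ih

lemma unjoyalF_iter_cancel {x y : Fin n} (hx : x ∈ tS a hp) (hy : y ∈ tS a hp) (c : ℕ)
    (h : (unjoyalF a hp)^[c] x = (unjoyalF a hp)^[c] y) : x = y := by
  induction c with
  | zero => exact h
  | succ c ih =>
    rw [Function.iterate_succ_apply', Function.iterate_succ_apply'] at h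
    exact ih (unjoyalF_injOn_S hp (unjoyalF_iter_mem hp hx c) (unjoyalF_iter_mem hp hy c) h)

lemma cyc_unjoyalF : cyc (unjoyalF a hp) = tS a hp := by
  ext v
  constructor
  · intro hv
    obtain ⟨c, hc, hcv⟩ := mem_cyc.1 hv
    by_cases horb : ∃ i, (unjoyalF a hp)^[i] v ∈ tS a hp
    · obtain ⟨i, hi⟩ := horb
      have hv' : (unjoyalF a hp)^[(i+1) * c] v = v := period_iter hcv (i+1)
      have hle : i ≤ (i+1) * c := by nlinarith
      rw [← Nat.sub_add_cancel hle, Function.iterate_add_apply] at hv'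
      exact hv' ▸ unjoyalF_iter_mem hp hi _
    · exfalso
      push_neg at horb
      have hfp : ∀ i, (unjoyalF a hp)^[i] v = p^[i] v := by
        intro i
        induction i with
        | zero => rfl
        | succ i ih =>
          rw [Function.iterate_succ_apply', Function.iterate_succ_apply', ih,
            ← ih, unjoyalF_not_mem (horb i), ih]
      have : p^[c] v = v := by rw [← hfp]; exact hcv
      have hvb : v = b := no_return hp hc this
      apply horb 0
      simp only [Function.iterate_zero, id_eq]
      have hb : b ∈ tS a hp := mem_tS.2 ⟨spmax a hp, le_rfl, spmax_spec a hp⟩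
      rw [hvb]
      exact hb
  · intro hv
    obtain ⟨i, j, hij, hiter⟩ := two_iter_eq (unjoyalF a hp) v
    have hvj : (unjoyalF a hp)^[j - i] v ∈ tS a hp := unjoyalF_iter_mem hp hv _
    have : (unjoyalF a hp)^[i] ((unjoyalF a hp)^[j - i] v) = (unjoyalF a hp)^[i] v := by
      rw [← Function.iterate_add_apply]
      rw [show i + (j - i) = j by omega]
      exact hiter.symm
    have hper : (unjoyalF a hp)^[j - i] v = v := unjoyalF_iter_cancel hp hvj hv i this
    exact mem_cyc.2 ⟨j - i, by omega, hper⟩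

lemma card_cyc_unjoyalF : (cyc (unjoyalF a hp)).card = spmax a hp + 1 := by
  rw [cyc_unjoyalF, tS_card]

lemma spine_unjoyalF (i : Fin (cyc (unjoyalF a hp)).card) :
    spine (unjoyalF a hp) i = p^[i.1] a := by
  have hlt : i.1 < spmax a hp + 1 := Nat.lt_of_lt_of_le i.2 (card_cyc_unjoyalF hp).le
  rw [spine_def]
  rw [orderIso_apply_eq (cyc_unjoyalF hp) rfl (tS_card a hp) i ⟨i.1, hlt⟩ rfl]
  exact unjoyalF_apply ⟨i.1, hlt⟩

lemma joyal_unjoyal (hn : 0 < n) (a b : Fin n) (p : Fin n → Fin n) (hp : IsPF p b) :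
    joyal hn (unjoyalF a hp) = (a, b, p) := by
  have hcard := card_cyc_unjoyalF (a := a) hp
  refine Prod.ext ?_ (Prod.ext ?_ ?_)
  · show spine (unjoyalF a hp) ⟨0, _⟩ = a
    rw [spine_unjoyalF hp]
    rfl
  · show spine (unjoyalF a hp) ⟨(cyc (unjoyalF a hp)).card - 1, _⟩ = b
    rw [spine_unjoyalF hp]
    simp only [Fin.val_mk, hcard, Nat.add_sub_cancel]
    exact spmax_spec a hp
  · show joyalP (unjoyalF a hp) = p
    funext v
    by_cases hv : v ∈ cyc (unjoyalF a hp)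
    · obtain ⟨i, hi⟩ := spine_surj hv
      rw [← hi, joyalP_spine, spine_unjoyalF hp, spine_unjoyalF hp]
      have hile : i.1 < spmax a hp + 1 := by have := i.2; omega
      rcases Nat.lt_or_ge i.1 (spmax a hp) with hlt | hge
      · rw [nxt_of_lt (show i.1 + 1 < (cyc (unjoyalF a hp)).card by omega)]
        rw [show ((⟨i.1 + 1, by omega⟩ : Fin (cyc (unjoyalF a hp)).card)).1 = i.1 + 1 from rfl,
          Function.iterate_succ_apply']
      · have him : i.1 = spmax a hp := by omega
        rw [nxt_last (show i.1 = (cyc (unjoyalF a hp)).card - 1 by omega), him,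
          spmax_spec a hp]
        exact hp.1.symm
    · rw [joyalP_not_mem hv]
      exact unjoyalF_not_mem (by rwa [← cyc_unjoyalF hp])

end RT2

/-- The set of doubly rooted trees `(a, b, p)`. -/
noncomputable def RTB (n : ℕ) : Finset (Fin n × Fin n × (Fin n → Fin n)) :=
  Finset.univ.filter (fun q => IsPF q.2.2 q.2.1)

lemma card_fun_eq_RTB (hn : 0 < n) :
    (Finset.univ : Finset (Fin n → Fin n)).card = (RTB n).card := by
  refine Finset.card_bij' (fun f _ => joyal hn f)
    (fun q hq => unjoyalF q.1 (Finset.mem_filter.1 hq).2) ?_ ?_ ?_ ?_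
  · intro f _
    rw [RTB, Finset.mem_filter]
    exact ⟨Finset.mem_univ _, joyalP_isPF hn f (by have := cyc_card_pos hn f; omega)⟩
  · intro q hq
    exact Finset.mem_univ _
  · intro f hf
    exact unjoyal_joyal hn f _
  · intro q hq
    exact joyal_unjoyal hn q.1 q.2.1 q.2.2 (Finset.mem_filter.1 hq).2

lemma card_RTB (hn : 0 < n) :
    (RTB n).card =
      n * n * (Finset.univ.filter (fun τ : SimpleGraph (Fin n) => τ.IsTree)).card := by
  rw [Finset.card_eq_sum_card_fiberwise
    (f := fun q : Fin n × Fin n × (Fin n → Fin n) => (q.1, q.2.1))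
    (t := Finset.univ ×ˢ Finset.univ)
    (fun q _ => Finset.mem_product.2 ⟨Finset.mem_univ _, Finset.mem_univ _⟩)]
  have fiber : ∀ x ∈ Finset.univ ×ˢ (Finset.univ : Finset (Fin n)),
      ((RTB n).filter (fun q => (q.1, q.2.1) = x)).card =
        (Finset.univ.filter (fun τ : SimpleGraph (Fin n) => τ.IsTree)).card := by
    rintro ⟨A, B⟩ _
    rw [card_trees_eq_card_pf B]
    refine Finset.card_bij' (fun q _ => q.2.2)
      (fun p hp => (A, B, p)) ?_ ?_ ?_ ?_
    · intro q hq
      rw [Finset.mem_filter] at hq ⊢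
      obtain ⟨hq1, hq2⟩ := hq
      rw [RTB, Finset.mem_filter] at hq1
      refine ⟨Finset.mem_univ _, ?_⟩
      have hB : q.2.1 = B := congrArg Prod.snd hq2
      exact hB ▸ hq1.2
    · intro p hp
      rw [Finset.mem_filter]
      refine ⟨?_, rfl⟩
      rw [RTB, Finset.mem_filter]
      exact ⟨Finset.mem_univ _, (Finset.mem_filter.1 hp).2⟩
    · intro q hq
      have h2 := (Finset.mem_filter.1 hq).2
      have hA : q.1 = A := congrArg Prod.fst h2
      have hB : q.2.1 = B := congrArg Prod.snd h2
      show (A, B, q.2.2) = q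
      rw [← hA, ← hB]
    · intro p hp
      rfl
  rw [Finset.sum_congr rfl fiber, Finset.sum_const, Finset.card_product,
    Finset.card_univ, Fintype.card_fin, smul_eq_mul]

/-- Cayley's formula via the Matrix-Tree theorem: the number of spanning
trees of the complete graph `K_n`, i.e. the number of trees on the labelled vertex set
`{1,…,n}`, is `n^(n-2)`. -/
theorem cayley_formula (n : ℕ) (hn : 1 ≤ n) :
    (Finset.univ.filter (fun τ : SimpleGraph (Fin n) => τ.IsTree)).card = n ^ (n - 2) := by
  have hn0 : 0 < n := hn
  have h1 : n * n * (Finset.univ.filter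
      (fun τ : SimpleGraph (Fin n) => τ.IsTree)).card = n ^ n := by
    rw [← card_RTB hn0, ← card_fun_eq_RTB hn0, Finset.card_univ, Fintype.card_fun,
      Fintype.card_fin]
  have h2 : n * n * n ^ (n - 2) = n ^ n := by
    rcases Nat.lt_or_ge n 2 with h | h
    · have : n = 1 := by omega
      subst this; norm_num
    · have : n * n * n ^ (n - 2) = n ^ (2 + (n - 2)) := by
        rw [pow_add, pow_two]
      rw [this]
      congr 1
      omega
  exact Nat.eq_of_mul_eq_mul_left (by positivity) (h1.trans h2.symm)
end

section
/- For an n×n Laplace-like matrix L with n ≥ 2, C(0) = 0 and T(0) = 0, where T(L) = Σ_τ A_τ(L); moreover if the identity (-1)^{n+1} T = C holds as functions on the (n-1)×(n-1) Laplace-like matrices, and the directional derivative identities v_{ij}(T(L)) = T(L') and v_{ij}(C(L)) = −C(L') hold for all i<j and all Laplace-like L, then (-1)^{n+1} T = C on n×n Laplace-like matrices. -/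
open scoped Classical

section Helpers

lemma tangentE_isSymm {n : ℕ} (i j : Fin n) : (tangentE i j).IsSymm := by
  ext a b
  simp only [Matrix.transpose_apply, tangentE, Matrix.of_apply]
  by_cases hai : a = i <;> by_cases haj : a = j <;> by_cases hbi : b = i <;>
    by_cases hbj : b = j <;> simp [hai, haj, hbi, hbj, and_comm, add_comm]

lemma tangentE_rowsum {n : ℕ} {i j : Fin n} (h : i ≠ j) (a : Fin n) :
    ∑ b, tangentE i j a b = 0 := by
  simp only [tangentE, Matrix.of_apply]
  by_cases hai : a = i <;> by_cases haj : a = j <;>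
    simp_all [Finset.sum_add_distrib, Finset.sum_sub_distrib, Finset.sum_ite_eq',
      eq_comm (a := i) (b := j)]

lemma diff_entry {m : ℕ} (L E : Matrix (Fin m) (Fin m) ℝ) (a b : Fin m) :
    Differentiable ℝ (fun t : ℝ => (L + t • E) a b) := by
  simp only [Matrix.add_apply, Matrix.smul_apply, smul_eq_mul]
  exact (differentiable_const _).add (differentiable_id.mul_const _)

lemma diff_treeSum {m : ℕ} (L E : Matrix (Fin m) (Fin m) ℝ) :
    Differentiable ℝ (fun t : ℝ => treeSum (L + t • E)) := by
  unfold treeSum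
  apply Differentiable.fun_sum
  intro τ _
  unfold amplitude
  intro t
  exact DifferentiableAt.fun_finsetProd fun p _ => (diff_entry L E p.1 p.2).differentiableAt

lemma diff_cof {m : ℕ} (L E : Matrix (Fin (m+1)) (Fin (m+1)) ℝ) :
    Differentiable ℝ (fun t : ℝ => cofactor (L + t • E) 0 0) := by
  unfold cofactor
  apply Differentiable.const_mul
  simp only [Matrix.det_apply']
  apply Differentiable.fun_sum
  intro σ _
  apply Differentiable.const_mul
  intro t
  apply DifferentiableAt.fun_finsetProd
  intro p _
  simp only [Matrix.submatrix_apply]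
  exact (diff_entry L E _ _).differentiableAt

lemma treeSum_zero' {n : ℕ} : treeSum (0 : Matrix (Fin (n+2)) (Fin (n+2)) ℝ) = 0 := by
  unfold treeSum
  apply Finset.sum_eq_zero
  intro τ hτ
  rw [Finset.mem_filter] at hτ
  have hcon := hτ.2.isConnected
  obtain ⟨w⟩ := hcon.preconnected (0 : Fin (n+2)) 1
  cases w with
  | cons h p =>
    rename_i v
    unfold amplitude
    rcases lt_or_gt_of_ne (τ.ne_of_adj h) with hlt | hgt
    · apply Finset.prod_eq_zero (i := ((0 : Fin (n+2)), v))
      · simp [hlt, h]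
      · simp
    · apply Finset.prod_eq_zero (i := (v, (0 : Fin (n+2))))
      · simp [hgt, h.symm]
      · simp

lemma cof_zero' {n : ℕ} : cofactor (0 : Matrix (Fin (n+2)) (Fin (n+2)) ℝ) 0 0 = 0 := by
  simp [cofactor]

lemma sub_isSymm {n : ℕ} {L : Matrix (Fin (n+2)) (Fin (n+2)) ℝ}
    (hL : ∀ a b, L a b = L b a) (i j : Fin (n+2)) :
    ((addRowCol L i j).submatrix j.succAbove j.succAbove).IsSymm := by
  ext a b
  simp only [Matrix.transpose_apply, Matrix.submatrix_apply, addRowCol, Matrix.of_apply]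
  set c := j.succAbove a
  set d := j.succAbove b
  by_cases h1 : c = i <;> by_cases h2 : d = i <;>
    simp [h1, h2, hL c d, hL j d, hL c j, hL d i, hL i c]

lemma sub_rowsum {n : ℕ} {L : Matrix (Fin (n+2)) (Fin (n+2)) ℝ}
    (hr : ∀ a, ∑ b, L a b = 0) {i j : Fin (n+2)} (hij : i ≠ j) (a : Fin (n+1)) :
    ∑ b, ((addRowCol L i j).submatrix j.succAbove j.succAbove) a b = 0 := by
  have hsum : ∀ c : Fin (n+2), ∑ x, addRowCol L i j c x
      = L c j + (if c = i then L j j else 0) := by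
    intro c
    simp only [addRowCol, Matrix.of_apply]
    rw [Finset.sum_add_distrib, Finset.sum_add_distrib, hr c]
    by_cases hc : c = i <;>
      simp [hc, hr, Finset.sum_ite_eq']
  have hj : ∀ c : Fin (n+2), addRowCol L i j c j
      = L c j + (if c = i then L j j else 0) := by
    intro c
    simp only [addRowCol, Matrix.of_apply]
    by_cases hc : c = i <;> simp [hc, hij.symm]
  have key := Fin.sum_univ_succAbove (fun x => addRowCol L i j (j.succAbove a) x) j
  simp only [Matrix.submatrix_apply]
  have h2 := hsum (j.succAbove a)
  rw [key, hj (j.succAbove a)] at h2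
  linarith

lemma decomp {n : ℕ} (L : Matrix (Fin n) (Fin n) ℝ) (hL : ∀ a b, L a b = L b a)
    (hr : ∀ a, ∑ b, L a b = 0) :
    L = ∑ p ∈ Finset.univ.filter (fun p : Fin n × Fin n => p.1 < p.2),
        L p.1 p.2 • tangentE p.1 p.2 := by
  ext a b
  rw [Matrix.sum_apply, Finset.sum_filter]
  by_cases hab : a = b
  · subst hab
    have hterm : ∀ p : Fin n × Fin n,
        (if p.1 < p.2 then (L p.1 p.2 • tangentE p.1 p.2) a a else 0)
        = -(if a = p.1 ∧ a < p.2 then L a p.2 else 0)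
          - (if a = p.2 ∧ p.1 < a then L p.1 a else 0) := by
      intro p
      simp only [Matrix.smul_apply, tangentE, Matrix.of_apply, smul_eq_mul]
      by_cases h1 : a = p.1 <;> by_cases h2 : a = p.2 <;>
        by_cases h12 : p.1 < p.2 <;>
        simp_all [lt_irrefl, apply_ite Neg.neg] <;> split <;> simp
    rw [Finset.sum_congr rfl (fun p _ => hterm p)]
    rw [Finset.sum_sub_distrib, Finset.sum_neg_distrib]
    have SA : (∑ p : Fin n × Fin n, if a = p.1 ∧ a < p.2 then L a p.2 else 0)
        = ∑ y, if a < y then L a y else 0 := by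
      rw [Fintype.sum_prod_type]
      simp only [ite_and]
      have inner : ∀ x : Fin n,
          (∑ y, if a = x then (if a < y then L a y else 0) else 0)
          = if a = x then (∑ y, if a < y then L a y else 0) else 0 := by
        intro x; split <;> simp
      rw [Finset.sum_congr rfl (fun x _ => inner x),
        Finset.sum_ite_eq Finset.univ a
          (fun _ => ∑ y, if a < y then L a y else 0)]
      simp
    have SB : (∑ p : Fin n × Fin n, if a = p.2 ∧ p.1 < a then L p.1 a else 0)
        = ∑ x, if x < a then L x a else 0 := by
      rw [Fintype.sum_prod_type]
      have inner : ∀ x : Fin n, (∑ y, if a = y ∧ x < a then L x a else 0)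
          = if x < a then L x a else 0 := by
        intro x
        simp only [ite_and]
        rw [Finset.sum_ite_eq Finset.univ a (fun _ => if x < a then L x a else 0)]
        simp
      rw [Finset.sum_congr rfl (fun x _ => inner x)]
    rw [SA, SB]
    have combine : (∑ y, ((if a < y then L a y else 0) + (if y < a then L y a else 0)))
        = ∑ y, (L a y - if y = a then L a a else 0) := by
      refine Finset.sum_congr rfl fun y _ => ?_
      rcases lt_trichotomy a y with h | h | h
      · simp [h, asymm h, ne_of_gt h]
      · subst h; simp [lt_irrefl]
      · simp [h, asymm h, ne_of_lt h, hL y a]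
    rw [Finset.sum_add_distrib, Finset.sum_sub_distrib, hr a,
      Finset.sum_ite_eq' Finset.univ a (fun _ => L a a)] at combine
    simp only [Finset.mem_univ, if_true, zero_sub] at combine
    linarith [combine]
  · have hterm : ∀ p : Fin n × Fin n,
        (if p.1 < p.2 then (L p.1 p.2 • tangentE p.1 p.2) a b else 0)
        = (if (a, b) = p ∧ a < b then L a b else 0)
          + (if (b, a) = p ∧ b < a then L a b else 0) := by
      intro p
      simp only [Matrix.smul_apply, tangentE, Matrix.of_apply, smul_eq_mul, Prod.ext_iff]
      obtain ⟨x, y⟩ := p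
      by_cases h1 : a = x <;> by_cases h2 : b = y <;> by_cases h3 : a = y <;>
        by_cases h4 : b = x <;> by_cases h12 : x < y <;>
        simp_all [lt_irrefl]
    rw [Finset.sum_congr rfl (fun p _ => hterm p)]
    rw [Finset.sum_add_distrib]
    simp only [ite_and]
    rw [Finset.sum_ite_eq Finset.univ (a, b) (fun _ => if a < b then L a b else 0),
      Finset.sum_ite_eq Finset.univ (b, a) (fun _ => if b < a then L a b else 0)]
    rcases lt_or_gt_of_ne hab with h | h <;> simp [h, le_of_lt, not_lt_of_gt]

end Helpers

/-- base case and inductive step of the paper's proof: for Laplace-like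
matrices of size `n + 2 ≥ 2` we have `C(0) = 0` and `T(0) = 0`; moreover, if the
identity `(-1)^{m+1} T = C` holds for `(n+1) × (n+1)` Laplace-like matrices, and the
directional derivative identities `v_{ij}(T(L)) = T(L')` and `v_{ij}(C(L)) = -C(L')`
hold for all `i < j` and all Laplace-like `L`, then `(-1)^{m+1} T = C` holds for
`(n+2) × (n+2)` Laplace-like matrices. -/
theorem induction_step (n : ℕ)
    (IH : ∀ K : Matrix (Fin (n + 1)) (Fin (n + 1)) ℝ, K.IsSymm →
      (∀ a, ∑ b, K a b = 0) →
      (-1 : ℝ) ^ ((n + 1) + 1) * treeSum K = cofactor K 0 0)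
    (hT : ∀ L : Matrix (Fin (n + 2)) (Fin (n + 2)) ℝ, L.IsSymm →
      (∀ a, ∑ b, L a b = 0) → ∀ i j : Fin (n + 2), i < j →
        deriv (fun t : ℝ => treeSum (L + t • tangentE i j)) 0 =
          treeSum ((addRowCol L i j).submatrix j.succAbove j.succAbove))
    (hC : ∀ L : Matrix (Fin (n + 2)) (Fin (n + 2)) ℝ, L.IsSymm →
      (∀ a, ∑ b, L a b = 0) → ∀ i j : Fin (n + 2), i < j →
        deriv (fun t : ℝ => cofactor (L + t • tangentE i j) 0 0) 0 =
          -cofactor ((addRowCol L i j).submatrix j.succAbove j.succAbove) 0 0) :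
    treeSum (0 : Matrix (Fin (n + 2)) (Fin (n + 2)) ℝ) = 0 ∧
    cofactor (0 : Matrix (Fin (n + 2)) (Fin (n + 2)) ℝ) 0 0 = 0 ∧
    ∀ L : Matrix (Fin (n + 2)) (Fin (n + 2)) ℝ, L.IsSymm →
      (∀ a, ∑ b, L a b = 0) →
      (-1 : ℝ) ^ ((n + 2) + 1) * treeSum L = cofactor L 0 0 := by
  refine ⟨treeSum_zero', cof_zero', ?_⟩
  intro L hs hr
  -- define F
  set F : Matrix (Fin (n+2)) (Fin (n+2)) ℝ → ℝ :=
    fun M => (-1 : ℝ) ^ ((n + 2) + 1) * treeSum M - cofactor M 0 0 with hF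
  -- step lemma: moving along a tangent direction does not change F
  have step : ∀ M : Matrix (Fin (n+2)) (Fin (n+2)) ℝ, M.IsSymm →
      (∀ a, ∑ b, M a b = 0) → ∀ i j : Fin (n+2), i < j → ∀ c : ℝ,
      F (M + c • tangentE i j) = F M := by
    intro M hMs hMr i j hij c
    have hdiff : Differentiable ℝ (fun t : ℝ => F (M + t • tangentE i j)) := by
      exact ((diff_treeSum M (tangentE i j)).const_mul _).sub (diff_cof M (tangentE i j))
    have hderiv : ∀ s : ℝ, deriv (fun t : ℝ => F (M + t • tangentE i j)) s = 0 := by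
      intro s
      set M₂ := M + s • tangentE i j with hM₂
      have hM₂s : M₂.IsSymm := by
        unfold Matrix.IsSymm
        rw [hM₂, Matrix.transpose_add, Matrix.transpose_smul, hMs, (tangentE_isSymm i j)]
      have hM₂r : ∀ a, ∑ b, M₂ a b = 0 := by
        intro a
        simp only [hM₂, Matrix.add_apply, Matrix.smul_apply, smul_eq_mul,
          Finset.sum_add_distrib, hMr a, ← Finset.mul_sum,
          tangentE_rowsum (ne_of_lt hij) a]
        ring
      have hpath : (fun t : ℝ => F (M + t • tangentE i j))
          = fun t : ℝ => F (M₂ + (t - s) • tangentE i j) := by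
        funext t
        congr 1
        rw [hM₂, add_assoc, ← add_smul, add_sub_cancel]
      rw [hpath]
      rw [deriv_comp_sub_const (fun u : ℝ => F (M₂ + u • tangentE i j)) s s, sub_self]
      -- now compute the derivative at 0 using hT, hC, IH
      have hdT := (diff_treeSum M₂ (tangentE i j)) 0
      have hdC := (diff_cof M₂ (tangentE i j)) 0
      have e1 : deriv (fun u : ℝ => F (M₂ + u • tangentE i j)) 0
          = (-1 : ℝ) ^ ((n + 2) + 1) *
              deriv (fun u : ℝ => treeSum (M₂ + u • tangentE i j)) 0 -
            deriv (fun u : ℝ => cofactor (M₂ + u • tangentE i j) 0 0) 0 := by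
        simp only [hF]
        rw [deriv_fun_sub ((hdT.const_mul _)) hdC, deriv_const_mul _ hdT]
      set K := (addRowCol M₂ i j).submatrix j.succAbove j.succAbove with hK
      have hKs : K.IsSymm := sub_isSymm (fun a b => hM₂s.apply b a) i j
      have hKr : ∀ a, ∑ b, K a b = 0 := sub_rowsum hM₂r (ne_of_lt hij)
      rw [e1, hT M₂ hM₂s hM₂r i j hij, hC M₂ hM₂s hM₂r i j hij, ← hK, ← IH K hKs hKr]
      ring
    have := is_const_of_deriv_eq_zero hdiff hderiv c 0
    simpa using this
  -- sums of tangent matrices are Laplace-like, and F vanishes on them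
  have hL : ∀ a b, L a b = L b a := fun a b => hs.apply b a
  have main : ∀ s : Finset (Fin (n+2) × Fin (n+2)),
      (∀ p ∈ s, p.1 < p.2) →
      ((∑ p ∈ s, L p.1 p.2 • tangentE p.1 p.2).IsSymm ∧
        (∀ a, ∑ b, (∑ p ∈ s, L p.1 p.2 • tangentE p.1 p.2) a b = 0) ∧
        F (∑ p ∈ s, L p.1 p.2 • tangentE p.1 p.2) = 0) := by
    intro s
    induction s using Finset.induction_on with
    | empty =>
      intro _
      simp only [Finset.sum_empty]
      refine ⟨by simp [Matrix.IsSymm], by simp, ?_⟩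
      simp only [hF, treeSum_zero', cof_zero']
      ring
    | insert q s' hq ih =>
      intro hsub
      have hq12 : q.1 < q.2 := hsub q (Finset.mem_insert_self q s')
      obtain ⟨ih1, ih2, ih3⟩ := ih (fun p hp => hsub p (Finset.mem_insert_of_mem hp))
      rw [Finset.sum_insert hq]
      set M := ∑ p ∈ s', L p.1 p.2 • tangentE p.1 p.2 with hM
      have comm : L q.1 q.2 • tangentE q.1 q.2 + M = M + L q.1 q.2 • tangentE q.1 q.2 :=
        add_comm _ _
      rw [comm]
      have hsymm : (M + L q.1 q.2 • tangentE q.1 q.2).IsSymm := by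
        unfold Matrix.IsSymm
        rw [Matrix.transpose_add, Matrix.transpose_smul, ih1, (tangentE_isSymm q.1 q.2)]
      have hrow : ∀ a, ∑ b, (M + L q.1 q.2 • tangentE q.1 q.2) a b = 0 := by
        intro a
        simp only [Matrix.add_apply, Matrix.smul_apply, smul_eq_mul,
          Finset.sum_add_distrib, ih2 a, ← Finset.mul_sum,
          tangentE_rowsum (ne_of_lt hq12) a]
        ring
      refine ⟨hsymm, hrow, ?_⟩
      rw [step M ih1 ih2 q.1 q.2 hq12 (L q.1 q.2), ih3]
  have hdec := decomp L hL hr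
  have := (main (Finset.univ.filter (fun p : Fin (n+2) × Fin (n+2) => p.1 < p.2))
    (fun p hp => (Finset.mem_filter.mp hp).2)).2.2
  rw [← hdec] at this
  simp only [hF] at this
  linarith
end
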